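/- arXiv:1009.3129 — 3 statements merged into one kernel-verified Lean document; each statement's English description precedes it below -/
import Mathlib

section
/- Let {M_i}_{i=1}^ℓ be a family of d×d matrices over F (F = ℝ or ℂ) that is irreducible, i.e., there is no nonzero proper linear subspace V of F^d with M_i V ⊆ V for all i. Then there exist D > 0 and k ∈ ℕ such that for any finite words I, J over {1,...,ℓ}, there exists a word K of length at most k with ‖M_{IKJ}‖ ≥ D ‖M_I‖ ‖M_J‖. -/
open scoped Matrix.Norms.L2Operator

set_option maxHeartbeats 1000000

/-- A family of square matrices over `𝕜` is irreducible if no nonzero proper linear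
subspace of `𝕜^d` is invariant under all of the matrices. -/
def IsIrreducibleFamily {𝕜 : Type*} [RCLike 𝕜] {n : Type*} [Fintype n] {ι : Type*}
    (M : ι → Matrix n n 𝕜) : Prop :=
  ¬ ∃ V : Submodule 𝕜 (n → 𝕜), V ≠ ⊥ ∧ V ≠ ⊤ ∧ ∀ i, ∀ v ∈ V, (M i).mulVec v ∈ V

section Aux
variable {𝕜 : Type*} [RCLike 𝕜] {ℓ d : ℕ} (M : Fin ℓ → Matrix (Fin d) (Fin d) 𝕜)

lemma matrix_ne_zero_of_mulVec {A : Matrix (Fin d) (Fin d) 𝕜}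
    (h : ∃ v, A.mulVec v ≠ 0) : A ≠ 0 := by
  rintro rfl
  obtain ⟨v, hv⟩ := h
  exact hv (Matrix.zero_mulVec v)

lemma matrix_eq_zero_of_mulVec {A : Matrix (Fin d) (Fin d) 𝕜}
    (h : ∀ v, A.mulVec v = 0) : A = 0 := by
  ext a b
  have := congrFun (h (Pi.single b 1)) a
  simpa [Matrix.mulVec_single] using this

lemma exists_mulVec_ne (hirr : IsIrreducibleFamily M) (hM : ∃ i, M i ≠ 0)
    {v : Fin d → 𝕜} (hv : v ≠ 0) : ∃ i, (M i).mulVec v ≠ 0 := by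
  by_contra h
  push_neg at h
  set W : Submodule 𝕜 (Fin d → 𝕜) := ⨅ i, LinearMap.ker (M i).mulVecLin with hW
  apply hirr
  refine ⟨W, ?_, ?_, ?_⟩
  · intro hbot
    apply hv
    rw [← Submodule.mem_bot (R := 𝕜), ← hbot]
    simp only [hW, Submodule.mem_iInf, LinearMap.mem_ker, Matrix.mulVecLin_apply]
    exact h
  · intro htop
    obtain ⟨i, hi⟩ := hM
    apply hi
    apply matrix_eq_zero_of_mulVec
    intro w
    have : w ∈ W := htop ▸ Submodule.mem_top
    rw [hW, Submodule.mem_iInf] at this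
    simpa using this i
  · intro i w hw
    simp only [hW, Submodule.mem_iInf, LinearMap.mem_ker, Matrix.mulVecLin_apply]
    intro j
    rw [hW, Submodule.mem_iInf] at hw
    have := hw i
    simp only [LinearMap.mem_ker, Matrix.mulVecLin_apply] at this
    rw [this, Matrix.mulVec_zero]

end Aux

section Aux
variable {𝕜 : Type*} [RCLike 𝕜] {ℓ d : ℕ} (M : Fin ℓ → Matrix (Fin d) (Fin d) 𝕜)

def wordSpan (v : Fin d → 𝕜) (m : ℕ) : Submodule 𝕜 (Fin d → 𝕜) :=
  Submodule.span 𝕜 {w | ∃ K : List (Fin ℓ), 1 ≤ K.length ∧ K.length ≤ m + 1 ∧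
    w = ((K.map M).prod).mulVec v}

lemma wordSpan_mono (v : Fin d → 𝕜) {m m' : ℕ} (h : m ≤ m') :
    wordSpan M v m ≤ wordSpan M v m' := by
  apply Submodule.span_mono
  rintro w ⟨K, h1, h2, rfl⟩
  exact ⟨K, h1, h2.trans (by omega), rfl⟩

lemma mem_wordSpan (v : Fin d → 𝕜) {m : ℕ} {K : List (Fin ℓ)} (h1 : 1 ≤ K.length)
    (h2 : K.length ≤ m + 1) : ((K.map M).prod).mulVec v ∈ wordSpan M v m :=
  Submodule.subset_span ⟨K, h1, h2, rfl⟩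

lemma wordSpan_step (v : Fin d → 𝕜) (m : ℕ) (i : Fin ℓ) {w : Fin d → 𝕜}
    (hw : w ∈ wordSpan M v m) : (M i).mulVec w ∈ wordSpan M v (m + 1) := by
  have : Submodule.map (M i).mulVecLin (wordSpan M v m) ≤ wordSpan M v (m + 1) := by
    rw [wordSpan, Submodule.map_span, Submodule.span_le]
    rintro x ⟨w, ⟨K, h1, h2, rfl⟩, rfl⟩
    refine Submodule.subset_span ⟨i :: K, by simp, by simpa using h2, ?_⟩
    simp [Matrix.mulVec_mulVec]
  exact this ⟨w, hw, rfl⟩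
end Aux

section Aux2
variable {𝕜 : Type*} [RCLike 𝕜] {ℓ d : ℕ} (M : Fin ℓ → Matrix (Fin d) (Fin d) 𝕜)

lemma wordSpan_top (hirr : IsIrreducibleFamily M) (hM : ∃ i, M i ≠ 0)
    {v : Fin d → 𝕜} (hv : v ≠ 0) : wordSpan M v d = ⊤ := by
  have key : ∀ m : ℕ, wordSpan M v m = ⊤ ∨ m + 1 ≤ Module.finrank 𝕜 (wordSpan M v m) := by
    intro m
    induction m with
    | zero =>
      right
      rw [Submodule.one_le_finrank_iff]
      obtain ⟨i, hi⟩ := exists_mulVec_ne M hirr hM hv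
      have hmem : (M i).mulVec v ∈ wordSpan M v 0 := by
        have := mem_wordSpan M v (m := 0) (K := [i]) (by simp) (by simp)
        simpa using this
      intro hbot
      rw [hbot] at hmem
      exact hi (by simpa using hmem)
    | succ m ih =>
      rcases ih with h | h
      · left
        exact eq_top_iff.2 (h ▸ wordSpan_mono M v (Nat.le_succ m))
      by_cases hle : wordSpan M v (m + 1) ≤ wordSpan M v m
      · left
        have heq : wordSpan M v m = ⊤ := by
          by_contra htop
          apply hirr
          refine ⟨wordSpan M v m, ?_, htop, fun i w hw => hle (wordSpan_step M v m i hw)⟩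
          intro hbot
          rw [hbot, finrank_bot] at h
          omega
        exact eq_top_iff.2 (heq ▸ wordSpan_mono M v (Nat.le_succ m))
      · right
        have hlt : wordSpan M v m < wordSpan M v (m + 1) :=
          lt_of_le_of_ne (wordSpan_mono M v (Nat.le_succ m)) (fun he => hle he.ge)
        have := Submodule.finrank_lt_finrank_of_lt hlt
        omega
  rcases key d with h | h
  · exact h
  · exfalso
    have h2 := Submodule.finrank_le (wordSpan M v d)
    rw [Module.finrank_pi] at h2
    simp at h2
    omega

lemma exists_bridge_word (hirr : IsIrreducibleFamily M) (hM : ∃ i, M i ≠ 0)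
    {A B : Matrix (Fin d) (Fin d) 𝕜} (hA : A ≠ 0) (hB : B ≠ 0) :
    ∃ K : List (Fin ℓ), 1 ≤ K.length ∧ K.length ≤ d + 1 ∧ A * (K.map M).prod * B ≠ 0 := by
  obtain ⟨a, b, hab⟩ : ∃ a b, B a b ≠ 0 := by
    by_contra h; push_neg at h; exact hB (by ext a b; simpa using h a b)
  set v : Fin d → 𝕜 := B.mulVec (Pi.single b 1) with hvdef
  have hv : v ≠ 0 := by
    intro h
    apply hab
    have := congrFun h a
    simpa [hvdef, Matrix.mulVec_single] using this
  by_contra h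
  push_neg at h
  apply hA
  apply matrix_eq_zero_of_mulVec
  intro w
  -- A vanishes on wordSpan M v d = ⊤
  have hker : wordSpan M v d ≤ LinearMap.ker A.mulVecLin := by
    rw [wordSpan, Submodule.span_le]
    rintro x ⟨K, h1, h2, rfl⟩
    simp only [SetLike.mem_coe, LinearMap.mem_ker, Matrix.mulVecLin_apply]
    rw [hvdef, Matrix.mulVec_mulVec, Matrix.mulVec_mulVec, h K h1 h2, Matrix.zero_mulVec]
  have hw : w ∈ wordSpan M v d := by rw [wordSpan_top M hirr hM hv]; trivial
  simpa using hker hw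

end Aux2

section Main
variable {𝕜 : Type*} [RCLike 𝕜] {ℓ d : ℕ} (M : Fin ℓ → Matrix (Fin d) (Fin d) 𝕜)

/-- Index type for nonempty words of length at most `d+1`. -/
abbrev Words (ℓ d : ℕ) := Σ m : Fin (d + 1), (Fin (m.1 + 1) → Fin ℓ)

lemma exists_words_rep {K : List (Fin ℓ)} (h1 : 1 ≤ K.length) (h2 : K.length ≤ d + 1) :
    ∃ w : Words ℓ d, List.ofFn w.2 = K := by
  obtain ⟨m0, hm⟩ : ∃ m0, K.length = m0 + 1 := ⟨K.length - 1, by omega⟩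
  refine ⟨⟨⟨m0, by omega⟩, fun i => K.get (Fin.cast hm.symm i)⟩, ?_⟩
  apply List.ext_getElem
  · simp only [List.length_ofFn]; omega
  · intro n hn1 hn2
    simp only [List.getElem_ofFn, List.get_eq_getElem, Fin.coe_cast]


noncomputable def wordProd (w : Words ℓ d) : Matrix (Fin d) (Fin d) 𝕜 := ((List.ofFn w.2).map M).prod

noncomputable def bridgeFun (p : Matrix (Fin d) (Fin d) 𝕜 × Matrix (Fin d) (Fin d) 𝕜) : ℝ :=
  ∑ w : Words ℓ d, ‖p.1 * wordProd M w * p.2‖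

lemma bridgeFun_continuous : Continuous (bridgeFun M) := by
  unfold bridgeFun
  exact continuous_finset_sum _
    (fun w _ => ((continuous_fst.mul continuous_const).mul continuous_snd).norm)

lemma le_bridgeFun (p : Matrix (Fin d) (Fin d) 𝕜 × Matrix (Fin d) (Fin d) 𝕜) (w : Words ℓ d) :
    ‖p.1 * wordProd M w * p.2‖ ≤ bridgeFun M p := by
  unfold bridgeFun
  exact Finset.single_le_sum (f := fun w => ‖p.1 * wordProd M w * p.2‖)
    (fun w _ => norm_nonneg _) (Finset.mem_univ w)

lemma exists_uniform_const (hirr : IsIrreducibleFamily M) (hM : ∃ i, M i ≠ 0) :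
    ∃ D : ℝ, 0 < D ∧ ∀ A B : Matrix (Fin d) (Fin d) 𝕜, A ≠ 0 → B ≠ 0 →
      ∃ w : Words ℓ d, D * ‖A‖ * ‖B‖ ≤ ‖A * wordProd M w * B‖ := by
  obtain ⟨i₀, hi₀⟩ := hM
  haveI : Nonempty (Words ℓ d) := ⟨⟨⟨0, by omega⟩, fun _ => i₀⟩⟩
  haveI : ProperSpace (Matrix (Fin d) (Fin d) 𝕜) := FiniteDimensional.proper 𝕜 _
  set S : Set (Matrix (Fin d) (Fin d) 𝕜 × Matrix (Fin d) (Fin d) 𝕜) :=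
    Metric.sphere 0 1 ×ˢ Metric.sphere 0 1 with hS
  have hScomp : IsCompact S := (isCompact_sphere _ _).prod (isCompact_sphere _ _)
  have hmemS : ∀ p : Matrix (Fin d) (Fin d) 𝕜 × Matrix (Fin d) (Fin d) 𝕜,
      p ∈ S ↔ ‖p.1‖ = 1 ∧ ‖p.2‖ = 1 := by
    intro p
    rw [hS, Set.mem_prod, mem_sphere_zero_iff_norm, mem_sphere_zero_iff_norm]
  have hSne : S.Nonempty := by
    refine ⟨((↑‖M i₀‖ : 𝕜)⁻¹ • M i₀, (↑‖M i₀‖ : 𝕜)⁻¹ • M i₀), ?_⟩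
    rw [hmemS]
    constructor <;> exact norm_smul_inv_norm hi₀
  obtain ⟨p₀, hp₀S, hp₀min⟩ := hScomp.exists_isMinOn hSne (bridgeFun_continuous M).continuousOn
  have hp₀1 : ‖p₀.1‖ = 1 := ((hmemS p₀).1 hp₀S).1
  have hp₀2 : ‖p₀.2‖ = 1 := ((hmemS p₀).1 hp₀S).2
  have hD₀ : 0 < bridgeFun M p₀ := by
    have h1 : p₀.1 ≠ 0 := fun h => by rw [h, norm_zero] at hp₀1; norm_num at hp₀1
    have h2 : p₀.2 ≠ 0 := fun h => by rw [h, norm_zero] at hp₀2; norm_num at hp₀2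
    obtain ⟨K, hK1, hK2, hKne⟩ := exists_bridge_word M hirr ⟨i₀, hi₀⟩ h1 h2
    obtain ⟨w, hw⟩ := exists_words_rep hK1 hK2
    have hterm : 0 < ‖p₀.1 * wordProd M w * p₀.2‖ := by
      rw [norm_pos_iff, wordProd, hw]
      exact hKne
    exact hterm.trans_le (le_bridgeFun M p₀ w)
  set N : ℕ := Fintype.card (Words ℓ d) with hN
  have hNpos : 0 < N := Fintype.card_pos
  refine ⟨bridgeFun M p₀ / N, by positivity, ?_⟩
  intro A B hA0 hB0
  have hAn : 0 < ‖A‖ := norm_pos_iff.2 hA0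
  have hBn : 0 < ‖B‖ := norm_pos_iff.2 hB0
  set p : Matrix (Fin d) (Fin d) 𝕜 × Matrix (Fin d) (Fin d) 𝕜 :=
    ((↑‖A‖ : 𝕜)⁻¹ • A, (↑‖B‖ : 𝕜)⁻¹ • B) with hp
  have hpS : p ∈ S := by
    rw [hmemS]
    exact ⟨norm_smul_inv_norm hA0, norm_smul_inv_norm hB0⟩
  have hfp : bridgeFun M p₀ ≤ bridgeFun M p := hp₀min hpS
  have hex : ∃ w : Words ℓ d, bridgeFun M p₀ / N ≤ ‖p.1 * wordProd M w * p.2‖ := by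
    by_contra hcon
    push_neg at hcon
    have hlt : bridgeFun M p < ∑ _w : Words ℓ d, bridgeFun M p₀ / N :=
      Finset.sum_lt_sum_of_nonempty Finset.univ_nonempty (fun w _ => hcon w)
    rw [Finset.sum_const, Finset.card_univ, ← hN, nsmul_eq_mul,
      mul_div_cancel₀ _ (by positivity : (N:ℝ) ≠ 0)] at hlt
    linarith
  obtain ⟨w, hw⟩ := hex
  have hnorm : ‖p.1 * wordProd M w * p.2‖ = ‖A‖⁻¹ * ‖B‖⁻¹ * ‖A * wordProd M w * B‖ := by
    have heq : p.1 * wordProd M w * p.2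
        = ((↑‖B‖ : 𝕜)⁻¹ * (↑‖A‖ : 𝕜)⁻¹) • (A * wordProd M w * B) := by
      rw [hp]
      simp only [smul_mul_assoc, mul_smul_comm, smul_smul]
    rw [heq, norm_smul, norm_mul, norm_inv, norm_inv, RCLike.norm_ofReal,
      RCLike.norm_ofReal, abs_of_pos hAn, abs_of_pos hBn]
    ring
  rw [hnorm] at hw
  refine ⟨w, ?_⟩
  calc bridgeFun M p₀ / N * ‖A‖ * ‖B‖
      ≤ (‖A‖⁻¹ * ‖B‖⁻¹ * ‖A * wordProd M w * B‖) * ‖A‖ * ‖B‖ := by gcongr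
    _ = ‖A * wordProd M w * B‖ := by field_simp

end Main

/-- If `{M_i}_{i=1}^ℓ` is irreducible, then there are `D > 0` and `k ∈ ℕ` such that for
any nonempty words `I, J` there is a nonempty word `K` of length at most `k` with
`‖M_{IKJ}‖ ≥ D ‖M_I‖ ‖M_J‖`. -/
theorem irreducible_bridging (𝕜 : Type*) [RCLike 𝕜] (ℓ d : ℕ)
    (M : Fin ℓ → Matrix (Fin d) (Fin d) 𝕜)
    (hirr : IsIrreducibleFamily M) :
    ∃ D : ℝ, 0 < D ∧ ∃ k : ℕ, 1 ≤ k ∧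
      ∀ I J : List (Fin ℓ), I ≠ [] → J ≠ [] →
        ∃ K : List (Fin ℓ), 1 ≤ K.length ∧ K.length ≤ k ∧
          D * ‖(I.map M).prod‖ * ‖(J.map M).prod‖ ≤ ‖((I ++ K ++ J).map M).prod‖ := by
  by_cases hM : ∃ i, M i ≠ 0
  case neg =>
    push_neg at hM
    refine ⟨1, one_pos, 1, le_refl 1, ?_⟩
    intro I J hI hJ
    obtain ⟨a, I', rfl⟩ := List.exists_cons_of_ne_nil hI
    refine ⟨[a], by simp, by simp, ?_⟩
    have h0 : (((a :: I').map M)).prod = 0 := by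
      simp [List.prod_cons, hM a]
    rw [h0, norm_zero, mul_zero, zero_mul]
    exact norm_nonneg _
  case pos =>
    obtain ⟨D, hD, hmain⟩ := exists_uniform_const M hirr hM
    obtain ⟨i₀, hi₀⟩ := hM
    refine ⟨D, hD, d + 1, by omega, ?_⟩
    intro I J hI hJ
    have hsplit : ∀ K : List (Fin ℓ),
        ((I ++ K ++ J).map M).prod = (I.map M).prod * (K.map M).prod * (J.map M).prod := by
      intro K
      rw [List.map_append, List.map_append, List.prod_append, List.prod_append]
    by_cases hA0 : (I.map M).prod = 0
    · refine ⟨[i₀], by simp, by simp, ?_⟩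
      rw [hA0, norm_zero, mul_zero, zero_mul]
      exact norm_nonneg _
    by_cases hB0 : (J.map M).prod = 0
    · refine ⟨[i₀], by simp, by simp, ?_⟩
      rw [hB0, norm_zero, mul_zero]
      exact norm_nonneg _
    obtain ⟨w, hw⟩ := hmain _ _ hA0 hB0
    refine ⟨List.ofFn w.2, by simp, ?_, ?_⟩
    · rw [List.length_ofFn]
      exact w.1.isLt
    · rw [hsplit]
      exact hw
end

section
/- Under the assumptions of the previous proposition (T ergodic measure-preserving, f_n non-negative with f_{n+m}(x) ≤ f_m(x) f_n(T^m x) and sup f_1 < ∞, α = lim_n (1/n)∫ log f_n dμ), for any ε, N > 0 and μ-a.e. x ∈ X there exists C(x) > 0 such that f_n(T^m x) ≤ C(x) exp(n·max{α, −N}) exp((n+m)ε) for all n, m ∈ ℕ. -/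
open MeasureTheory Filter
open scoped ENNReal

/-- `log` with the convention `log x = -∞` for `x ≤ 0`. -/
noncomputable def elog (x : ℝ) : EReal := ENNReal.log (ENNReal.ofReal x)

/-- The positive part of an extended real, as an extended nonnegative real. -/
noncomputable def epos (e : EReal) : ℝ≥0∞ := if e = ⊤ then ⊤ else ENNReal.ofReal e.toReal

/-- Integral of an `EReal`-valued function (difference of the integrals of the positive
and negative parts), allowing the value `-∞`. -/
noncomputable def eintegral {X : Type*} [MeasurableSpace X] (μ : Measure X)
    (g : X → EReal) : EReal :=
  ((∫⁻ x, epos (g x) ∂μ : ℝ≥0∞) : EReal) - ((∫⁻ x, epos (-(g x)) ∂μ : ℝ≥0∞) : EReal)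

open Topology

section KW

variable {X : Type*} [MeasurableSpace X]

lemma integrable_of_bound (μ : Measure X) [IsProbabilityMeasure μ] {g : X → ℝ}
    (hg : Measurable g) (b : ℝ) (hb : ∀ x, |g x| ≤ b) : Integrable g μ :=
  (integrable_const b).mono' hg.aestronglyMeasurable (Filter.Eventually.of_forall hb)

lemma integral_comp_iterate {μ : Measure X} {T : X → X} (hT : MeasurePreserving T μ μ)
    (j : ℕ) {g : X → ℝ} (hg : Measurable g) :
    ∫ x, g (T^[j] x) ∂μ = ∫ x, g x ∂μ := by
  have h2 : MeasurePreserving (T^[j]) μ μ := hT.iterate j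
  calc ∫ x, g (T^[j] x) ∂μ = ∫ y, g y ∂(Measure.map (T^[j]) μ) :=
        (integral_map h2.measurable.aemeasurable hg.aestronglyMeasurable).symm
    _ = ∫ x, g x ∂μ := by rw [h2.map_eq]

lemma sum_range_add' {M : Type*} [AddCommMonoid M] (f : ℕ → M) (a b : ℕ) :
    ∑ j ∈ Finset.range (a + b), f j
      = (∑ j ∈ Finset.range a, f j) + ∑ j ∈ Finset.range b, f (a + j) := by
  induction b with
  | zero => simp
  | succ b ih => rw [← Nat.add_assoc, Finset.sum_range_succ, ih, Finset.sum_range_succ, add_assoc]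

/-- Katznelson–Weiss style bound: for a subadditive family with linear bounds whose integrals
are all at least `t * n`, almost everywhere `g n x ≥ (t - ε) n` eventually. -/
lemma kw_liminf (μ : Measure X) [IsProbabilityMeasure μ]
    (T : X → X) (hT : Ergodic T μ) (g : ℕ → X → ℝ) (hgm : ∀ n, Measurable (g n))
    (c : ℝ) (hc : 0 ≤ c) (hbd : ∀ n : ℕ, 1 ≤ n → ∀ x, |g n x| ≤ c * n)
    (hsub : ∀ m n : ℕ, 1 ≤ m → 1 ≤ n → ∀ x, g (n + m) x ≤ g m x + g n (T^[m] x))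
    (t : ℝ) (ht : ∀ n : ℕ, 1 ≤ n → t * n ≤ ∫ x, g n x ∂μ) :
    ∀ᵐ x ∂μ, ∀ ε : ℝ, 0 < ε → ∀ᶠ n : ℕ in atTop, (t - ε) * n ≤ g n x := by
  obtain ⟨B, hBdef⟩ : ∃ B : ℚ → Set X, B = fun q : ℚ =>
      {x | ∀ δ : ℚ, 0 < δ → ∀ N : ℕ, ∃ n : ℕ, 1 ≤ n ∧ N ≤ n ∧ g n x ≤ ((q : ℝ) + (δ : ℝ)) * n} :=
    ⟨_, rfl⟩
  have hBmem : ∀ q x, x ∈ B q ↔ ∀ δ : ℚ, 0 < δ → ∀ N : ℕ,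
      ∃ n : ℕ, 1 ≤ n ∧ N ≤ n ∧ g n x ≤ ((q : ℝ) + (δ : ℝ)) * n := by
    intro q x; rw [hBdef]; exact Iff.rfl
  have hBm : ∀ q, MeasurableSet (B q) := by
    intro q
    have heq : B q = ⋂ (δ : ℚ), ⋂ (_ : 0 < δ), ⋂ (N : ℕ), ⋃ (n : ℕ), ⋃ (_ : 1 ≤ n), ⋃ (_ : N ≤ n),
        {x | g n x ≤ ((q : ℝ) + (δ : ℝ)) * n} := by
      ext x
      rw [hBmem]
      simp only [Set.mem_iInter, Set.mem_iUnion, Set.mem_setOf_eq, exists_prop]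
    rw [heq]
    exact MeasurableSet.iInter fun δ => MeasurableSet.iInter fun _ =>
      MeasurableSet.iInter fun N => MeasurableSet.iUnion fun n => MeasurableSet.iUnion fun _ =>
      MeasurableSet.iUnion fun _ => measurableSet_le (hgm n) measurable_const
  have hinv : ∀ q : ℚ, T ⁻¹' (B q) ⊆ B q := by
    intro q x hx
    rw [Set.mem_preimage, hBmem] at hx
    rw [hBmem]
    intro δ hδ N
    have hδR : (0 : ℝ) < (δ : ℝ) := by exact_mod_cast hδ
    obtain ⟨N', hN'⟩ : ∃ N' : ℕ, N' = max N (Nat.ceil ((2 * (c + |(q : ℝ)|)) / (δ : ℝ)) + 1) :=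
      ⟨_, rfl⟩
    obtain ⟨n, hn1, hnN, hng⟩ := hx (δ / 2) (by positivity) N'
    have hnceil : ((2 * (c + |(q : ℝ)|)) / (δ : ℝ)) ≤ (n : ℝ) := by
      have h1 : Nat.ceil ((2 * (c + |(q : ℝ)|)) / (δ : ℝ)) ≤ n := by
        have := le_trans (le_max_right N _) (hN' ▸ hnN)
        omega
      exact le_trans (Nat.le_ceil _) (by exact_mod_cast h1)
    have h4 : 2 * (c + |(q : ℝ)|) ≤ (n : ℝ) * (δ : ℝ) := (div_le_iff₀ hδR).mp hnceil
    refine ⟨n + 1, by omega, by have := le_trans (le_max_left N _) (hN' ▸ hnN); omega, ?_⟩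
    have h1 : g (n + 1) x ≤ g 1 x + g n (T^[1] x) := hsub 1 n le_rfl hn1 x
    rw [Function.iterate_one] at h1
    have h2 : g 1 x ≤ c := by
      have := hbd 1 le_rfl x
      simp only [Nat.cast_one, mul_one] at this
      exact (abs_le.mp this).2
    have h3 : g n (T x) ≤ ((q : ℝ) + ((δ / 2 : ℚ) : ℝ)) * n := hng
    have hcast : ((δ / 2 : ℚ) : ℝ) = (δ : ℝ) / 2 := by push_cast; ring
    rw [hcast] at h3
    have habs : -(|(q : ℝ)|) ≤ (q : ℝ) := neg_abs_le _
    push_cast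
    nlinarith [h1, h2, h3, h4, habs, hδR]
  have key : ∀ q : ℚ, (q : ℝ) < t → μ (B q) = 0 := by
    intro q hq
    rcases hT.ae_empty_or_univ_of_preimage_ae_le' (hBm q).nullMeasurableSet
        (HasSubset.Subset.eventuallyLE (hinv q)) (measure_ne_top μ _) with h0 | h1
    · exact ae_eq_empty.mp h0
    · exfalso
      have hB1 : μ (B q) = 1 := by
        have h2 := measure_congr h1
        simpa [measure_univ] using h2
      have hle : t ≤ (q : ℝ) := by
        refine le_of_forall_pos_le_add fun ε0 hε0 => ?_
        obtain ⟨ε', hε'def⟩ : ∃ v : ℝ, v = ε0 / 3 := ⟨_, rfl⟩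
        have hε' : 0 < ε' := by rw [hε'def]; positivity
        obtain ⟨K, hK⟩ : ∃ v : ℝ, v = c + |(q : ℝ)| + 1 := ⟨_, rfl⟩
        have habs : -(|(q : ℝ)|) ≤ (q : ℝ) := neg_abs_le _
        have hKpos : (0 : ℝ) < K := by
          have := abs_nonneg (q : ℝ); rw [hK]; linarith
        obtain ⟨E, hEdef⟩ : ∃ E : ℕ → Set X,
            E = fun M => {x | ∀ s : ℕ, 1 ≤ s → s ≤ M → ((q : ℝ) + ε') * s < g s x} := ⟨_, rfl⟩
        have hEmem : ∀ M x, x ∈ E M ↔ ∀ s : ℕ, 1 ≤ s → s ≤ M → ((q : ℝ) + ε') * s < g s x := by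
          intro M x; rw [hEdef]; exact Iff.rfl
        have hEm : ∀ M, MeasurableSet (E M) := by
          intro M
          have heq : E M = ⋂ (s : ℕ), ⋂ (_ : 1 ≤ s), ⋂ (_ : s ≤ M),
              {x | ((q : ℝ) + ε') * s < g s x} := by
            ext x
            rw [hEmem]
            simp only [Set.mem_iInter, Set.mem_setOf_eq]
          rw [heq]
          exact MeasurableSet.iInter fun s => MeasurableSet.iInter fun _ =>
            MeasurableSet.iInter fun _ => measurableSet_lt measurable_const (hgm s)
        have hEanti : Antitone E := by
          intro M M' hMM' x hx
          rw [hEmem] at hx ⊢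
          exact fun s hs1 hsM => hx s hs1 (le_trans hsM hMM')
        have hEinter : μ (⋂ M, E M) = 0 := by
          have hsub2 : (⋂ M, E M) ⊆ (B q)ᶜ := by
            intro x hx hxB
            obtain ⟨δ, hδ0, hδε⟩ := exists_rat_btwn hε'
            rw [hBmem] at hxB
            obtain ⟨n, hn1, _, hng⟩ := hxB δ (by exact_mod_cast hδ0) 1
            have hlt := (hEmem n x).mp (Set.mem_iInter.mp hx n) n hn1 le_rfl
            have hn0 : (0 : ℝ) < (n : ℝ) := by exact_mod_cast hn1
            nlinarith [hng, hlt, hδε, hn0]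
          have hcompl : μ ((B q)ᶜ) = 0 := by
            rw [measure_compl (hBm q) (measure_ne_top μ _), hB1, measure_univ, tsub_self]
          exact le_antisymm (le_trans (measure_mono hsub2) hcompl.le) zero_le
        have htendsto : Tendsto (fun M => μ (E M)) atTop (𝓝 0) := by
          have h5 := tendsto_measure_iInter_atTop (fun M => (hEm M).nullMeasurableSet) hEanti
            ⟨0, measure_ne_top μ _⟩
          rw [hEinter] at h5
          exact h5
        have hofpos : (0 : ℝ≥0∞) < ENNReal.ofReal (ε' / K) := by
          rw [ENNReal.ofReal_pos]; positivity
        obtain ⟨M, hMlt, hM1⟩ :=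
          ((htendsto.eventually_lt_const hofpos).and (eventually_ge_atTop 1)).exists
        obtain ⟨h, hhdef⟩ : ∃ h : X → ℝ, h = Set.indicator (E M) (fun _ => K) := ⟨_, rfl⟩
        have hh0 : ∀ y, 0 ≤ h y := by
          rw [hhdef]; exact fun y => Set.indicator_nonneg (fun _ _ => hKpos.le) y
        have hhK : ∀ y, |h y| ≤ K := by
          intro y
          rw [abs_of_nonneg (hh0 y)]
          by_cases hy : y ∈ E M
          · simp [hhdef, hy]
          · simp [hhdef, hy, hKpos.le]
        have hhm : Measurable h := by rw [hhdef]; exact measurable_const.indicator (hEm M)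
        -- main pointwise estimate
        have main : ∀ n : ℕ, 1 ≤ n → ∀ x,
            g n x ≤ ((q : ℝ) + ε') * n + (∑ j ∈ Finset.range n, h (T^[j] x)) + M * K := by
          intro n
          induction n using Nat.strong_induction_on with
          | _ n IH =>
            intro hn1 x
            have hsumnn : 0 ≤ ∑ j ∈ Finset.range n, h (T^[j] x) :=
              Finset.sum_nonneg fun j _ => hh0 _
            by_cases hnM : n ≤ M
            · have h1 : g n x ≤ c * n := (abs_le.mp (hbd n hn1 x)).2
              have hnM' : (n : ℝ) ≤ (M : ℝ) := by exact_mod_cast hnM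
              have e1 : c - (q : ℝ) - ε' ≤ K := by rw [hK]; linarith
              have e2 : (c - (q : ℝ) - ε') * n ≤ K * n :=
                mul_le_mul_of_nonneg_right e1 (Nat.cast_nonneg n)
              have e3 : K * (n : ℝ) ≤ K * M := mul_le_mul_of_nonneg_left hnM' hKpos.le
              nlinarith [h1, e2, e3, hsumnn]
            · push_neg at hnM
              by_cases hxE : x ∈ E M
              · have hn2 : 2 ≤ n := by omega
                have hstep : g n x ≤ g 1 x + g (n - 1) (T^[1] x) := by
                  have h6 := hsub 1 (n - 1) le_rfl (by omega) x
                  rwa [Nat.sub_add_cancel (by omega)] at h6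
                rw [Function.iterate_one] at hstep
                have hIH := IH (n - 1) (by omega) (by omega) (T x)
                have hre : ∀ j, h (T^[j] (T x)) = h (T^[j + 1] x) := by
                  intro j; rw [Function.iterate_succ_apply]
                have hsum : ∑ j ∈ Finset.range n, h (T^[j] x)
                    = (∑ j ∈ Finset.range (n - 1), h (T^[j + 1] x)) + h x := by
                  have h7 := Finset.sum_range_succ' (fun j => h (T^[j] x)) (n - 1)
                  rw [Nat.sub_add_cancel (by omega)] at h7
                  simpa using h7
                have hg1 : g 1 x ≤ c := by
                  have := hbd 1 le_rfl x
                  simp only [Nat.cast_one, mul_one] at this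
                  exact (abs_le.mp this).2
                have hhx : h x = K := by rw [hhdef]; exact Set.indicator_of_mem hxE _
                have hcast : ((n - 1 : ℕ) : ℝ) = (n : ℝ) - 1 := by
                  push_cast [hn1]; ring
                have hsum2 : ∑ j ∈ Finset.range (n - 1), h (T^[j] (T x))
                    = ∑ j ∈ Finset.range (n - 1), h (T^[j + 1] x) :=
                  Finset.sum_congr rfl fun j _ => hre j
                rw [hsum2, hcast] at hIH
                rw [hsum, hhx]
                have e1 : c ≤ (q : ℝ) + ε' + K := by rw [hK]; linarith
                linarith [hstep, hg1, hIH]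
              · have hxE' : ∃ s : ℕ, 1 ≤ s ∧ s ≤ M ∧ g s x ≤ ((q : ℝ) + ε') * s := by
                  by_contra hcon
                  push_neg at hcon
                  exact hxE ((hEmem M x).mpr fun s hs1 hsM => hcon s hs1 hsM)
                obtain ⟨s, hs1, hsM, hgs⟩ := hxE'
                have hsn : s < n := by omega
                have hstep : g n x ≤ g s x + g (n - s) (T^[s] x) := by
                  have h6 := hsub s (n - s) hs1 (by omega) x
                  rwa [Nat.sub_add_cancel hsn.le] at h6
                have hIH := IH (n - s) (by omega) (by omega) (T^[s] x)
                have hsplit : ∑ j ∈ Finset.range n, h (T^[j] x)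
                    = (∑ j ∈ Finset.range s, h (T^[j] x))
                      + ∑ j ∈ Finset.range (n - s), h (T^[s + j] x) := by
                  have h7 := sum_range_add' (fun j => h (T^[j] x)) s (n - s)
                  rwa [Nat.add_sub_cancel' hsn.le] at h7
                have hre : ∀ j, h (T^[j] (T^[s] x)) = h (T^[s + j] x) := by
                  intro j
                  rw [add_comm s j, Function.iterate_add_apply]
                have hdrop : ∑ j ∈ Finset.range (n - s), h (T^[j] (T^[s] x))
                    ≤ ∑ j ∈ Finset.range n, h (T^[j] x) := by
                  rw [hsplit]
                  have h8 : ∑ j ∈ Finset.range (n - s), h (T^[j] (T^[s] x))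
                      = ∑ j ∈ Finset.range (n - s), h (T^[s + j] x) :=
                    Finset.sum_congr rfl fun j _ => hre j
                  rw [h8]
                  have h9 : (0 : ℝ) ≤ ∑ j ∈ Finset.range s, h (T^[j] x) :=
                    Finset.sum_nonneg fun j _ => hh0 _
                  linarith
                have hcast : ((n - s : ℕ) : ℝ) = (n : ℝ) - (s : ℝ) := by
                  push_cast [hsn.le]; ring
                rw [hcast] at hIH
                have hs' : ((q : ℝ) + ε') * s + ((q : ℝ) + ε') * ((n : ℝ) - s)
                    = ((q : ℝ) + ε') * n := by ring
                linarith [hstep, hgs, hIH, hdrop]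
        -- integrate the pointwise estimate
        have hEtoReal : K * (μ (E M)).toReal ≤ ε' := by
          have h1 : (μ (E M)).toReal ≤ ε' / K := ENNReal.toReal_le_of_le_ofReal
            (by positivity) hMlt.le
          have h2 : K * (μ (E M)).toReal ≤ K * (ε' / K) :=
            mul_le_mul_of_nonneg_left h1 hKpos.le
          rwa [mul_div_cancel₀ _ (ne_of_gt hKpos)] at h2
        have hints : ∀ n : ℕ, 1 ≤ n →
            t * n ≤ ((q : ℝ) + ε') * n + (n : ℝ) * (K * (μ (E M)).toReal) + M * K := by
          intro n hn
          have hgint : Integrable (g n) μ := integrable_of_bound μ (hgm n) (c * n) (hbd n hn)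
          have hhint : ∀ j : ℕ, Integrable (fun x => h (T^[j] x)) μ := fun j =>
            integrable_of_bound μ (hhm.comp (hT.toMeasurePreserving.iterate j).measurable) K
              (fun x => hhK _)
          have hsint : Integrable (fun x => ∑ j ∈ Finset.range n, h (T^[j] x)) μ :=
            integrable_finset_sum _ (fun j _ => hhint j)
          have hint2 : Integrable (fun x =>
              (((q : ℝ) + ε') * n + M * K) + ∑ j ∈ Finset.range n, h (T^[j] x)) μ :=
            (integrable_const _).add hsint
          have hmono := integral_mono hgint hint2
            (fun x => by have := main n hn x; linarith)
          have hsumint : ∫ x, (∑ j ∈ Finset.range n, h (T^[j] x)) ∂μ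
              = (n : ℝ) * (K * (μ (E M)).toReal) := by
            rw [integral_finset_sum _ (fun j _ => hhint j)]
            have hone : ∀ j : ℕ, ∫ x, h (T^[j] x) ∂μ = K * (μ (E M)).toReal := by
              intro j
              rw [integral_comp_iterate hT.toMeasurePreserving j hhm]
              rw [hhdef, integral_indicator_const K (hEm M), smul_eq_mul, mul_comm]; rfl
            rw [Finset.sum_congr rfl fun j _ => hone j, Finset.sum_const, Finset.card_range,
              nsmul_eq_mul]
          rw [integral_add (integrable_const _) hsint, integral_const, hsumint] at hmono
          simp only [measure_univ, ENNReal.toReal_one, probReal_univ, smul_eq_mul, one_mul] at hmono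
          calc t * n ≤ ∫ x, g n x ∂μ := ht n hn
            _ ≤ _ := by linarith [hmono]
        -- choose n large
        obtain ⟨n0, hn0⟩ := exists_nat_ge ((M : ℝ) * K / ε')
        have hn0' : (M : ℝ) * K / ε' ≤ ((n0 + 1 : ℕ) : ℝ) := by
          push_cast
          push_cast at hn0
          linarith
        have hMKn : (M : ℝ) * K ≤ ε' * ((n0 + 1 : ℕ) : ℝ) := by
          rw [div_le_iff₀ hε'] at hn0'
          linarith [hn0']
        have hfin := hints (n0 + 1) (by omega)
        have hnpos : (0 : ℝ) < ((n0 + 1 : ℕ) : ℝ) := by positivity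
        have hKE := hEtoReal
        have hstep2 : t * ((n0 + 1 : ℕ) : ℝ) ≤ ((q : ℝ) + 3 * ε') * ((n0 + 1 : ℕ) : ℝ) := by
          have h10 : ((n0 + 1 : ℕ) : ℝ) * (K * (μ (E M)).toReal)
              ≤ ((n0 + 1 : ℕ) : ℝ) * ε' := mul_le_mul_of_nonneg_left hKE hnpos.le
          nlinarith [hfin, hMKn, h10]
        have := le_of_mul_le_mul_right (by linarith [hstep2]) hnpos
        calc t ≤ (q : ℝ) + 3 * ε' := by
              have := mul_le_mul_of_nonneg_right hstep2 (le_of_lt (inv_pos.mpr hnpos))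
              calc t = t * ((n0 + 1 : ℕ) : ℝ) * (((n0 + 1 : ℕ) : ℝ))⁻¹ := by
                    field_simp
                _ ≤ ((q : ℝ) + 3 * ε') * ((n0 + 1 : ℕ) : ℝ) * (((n0 + 1 : ℕ) : ℝ))⁻¹ := by
                    exact mul_le_mul_of_nonneg_right hstep2 (le_of_lt (inv_pos.mpr hnpos))
                _ = (q : ℝ) + 3 * ε' := by field_simp
          _ = (q : ℝ) + ε0 := by rw [hε'def]; ring
      exact absurd hq (not_lt.mpr hle)
  -- assemble
  have hUnull : μ (⋃ q : ℚ, ⋃ (_ : (q : ℝ) < t), B q) = 0 :=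
    measure_iUnion_null fun q => measure_iUnion_null fun hq => key q hq
  have hae : ∀ᵐ x ∂μ, x ∉ ⋃ q : ℚ, ⋃ (_ : (q : ℝ) < t), B q :=
    measure_eq_zero_iff_ae_notMem.mp hUnull
  filter_upwards [hae] with x hx ε hε
  obtain ⟨q, hq1, hq2⟩ := exists_rat_btwn (show t - ε < t by linarith)
  have hxB : x ∉ B q := fun hxB => hx (Set.mem_iUnion.mpr ⟨q, Set.mem_iUnion.mpr ⟨hq2, hxB⟩⟩)
  simp only [hBmem] at hxB
  push_neg at hxB
  obtain ⟨δ, hδ, N, hN⟩ := hxB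
  filter_upwards [eventually_ge_atTop (max N 1)] with n hn
  have h1 : 1 ≤ n := le_trans (le_max_right N 1) hn
  have h2 : N ≤ n := le_trans (le_max_left N 1) hn
  have h3 := hN n h1 h2
  have hδ0 : (0 : ℝ) ≤ (δ : ℝ) := by exact_mod_cast hδ.le
  have h5 : (t - ε) * n ≤ ((q : ℝ) + (δ : ℝ)) * n := by
    apply mul_le_mul_of_nonneg_right _ (Nat.cast_nonneg n)
    linarith
  linarith

end KW

section GLOG

variable {X : Type*} [MeasurableSpace X]

/-- The truncated logarithm family. -/
noncomputable def glog (f : ℕ → X → ℝ) (NN : ℝ) (n : ℕ) (x : X) : ℝ :=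
  Real.log (max (f n x) (Real.exp (-(NN * (n : ℝ)))))

lemma glog_measurable {f : ℕ → X → ℝ} (hmeas : ∀ n, Measurable (f n)) (NN : ℝ) (n : ℕ) :
    Measurable (glog f NN n) :=
  Real.measurable_log.comp ((hmeas n).max measurable_const)

variable {T : X → X} {f : ℕ → X → ℝ} {C : ℝ}

lemma f_le_pow (hnonneg : ∀ n x, 0 ≤ f n x) (hC : ∀ x, f 1 x ≤ C)
    (hsub : ∀ m n : ℕ, 1 ≤ m → 1 ≤ n → ∀ x, f (n + m) x ≤ f m x * f n (T^[m] x)) :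
    ∀ n : ℕ, 1 ≤ n → ∀ x, f n x ≤ (max C 1) ^ n := by
  intro n
  induction n with
  | zero => omega
  | succ n IH =>
    intro _ x
    rcases Nat.eq_or_lt_of_le (Nat.one_le_iff_ne_zero.mpr (Nat.succ_ne_zero n)) with h1 | h2
    · have : n = 0 := by omega
      subst this
      simpa [pow_one] using le_trans (hC x) (le_max_left C 1)
    · have hn1 : 1 ≤ n := by omega
      have h3 : f (n + 1) x ≤ f 1 x * f n (T^[1] x) := hsub 1 n le_rfl hn1 x
      have h4 : f n (T^[1] x) ≤ (max C 1) ^ n := IH hn1 _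
      have h5 : f 1 x ≤ max C 1 := le_trans (hC x) (le_max_left C 1)
      calc f (n + 1) x ≤ f 1 x * f n (T^[1] x) := h3
        _ ≤ (max C 1) * (max C 1) ^ n := by
            apply mul_le_mul h5 h4 (hnonneg _ _)
            exact le_trans zero_le_one (le_max_right C 1)
        _ = (max C 1) ^ (n + 1) := by ring

lemma glog_pos_arg (NN : ℝ) (n : ℕ) (x : X) (hnonneg : ∀ n x, 0 ≤ f n x) :
    0 < max (f n x) (Real.exp (-(NN * (n : ℝ)))) :=
  lt_of_lt_of_le (Real.exp_pos _) (le_max_right _ _)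

lemma glog_ge (NN : ℝ) (n : ℕ) (x : X) : -(NN * (n : ℝ)) ≤ glog f NN n x := by
  have h := Real.log_le_log (Real.exp_pos (-(NN * (n : ℝ)))) (le_max_right (f n x) _)
  rwa [Real.log_exp] at h

lemma glog_le (hnonneg : ∀ n x, 0 ≤ f n x) (hC : ∀ x, f 1 x ≤ C)
    (hsub : ∀ m n : ℕ, 1 ≤ m → 1 ≤ n → ∀ x, f (n + m) x ≤ f m x * f n (T^[m] x))
    {NN : ℝ} (hNN : 0 ≤ NN) (n : ℕ) (hn : 1 ≤ n) (x : X) :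
    glog f NN n x ≤ (n : ℝ) * Real.log (max C 1) := by
  have hM1 : (1 : ℝ) ≤ max C 1 := le_max_right C 1
  have h1 : f n x ≤ (max C 1) ^ n := f_le_pow hnonneg hC hsub n hn x
  have h2 : Real.exp (-(NN * (n : ℝ))) ≤ (max C 1) ^ n := by
    calc Real.exp (-(NN * (n : ℝ))) ≤ 1 := by
          rw [Real.exp_le_one_iff]
          have : (0:ℝ) ≤ NN * n := by positivity
          linarith
      _ ≤ (max C 1) ^ n := one_le_pow₀ hM1
  have h3 : max (f n x) (Real.exp (-(NN * (n : ℝ)))) ≤ (max C 1) ^ n := max_le h1 h2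
  have h4 := Real.log_le_log (glog_pos_arg NN n x hnonneg) h3
  rwa [Real.log_pow] at h4

lemma glog_abs (hnonneg : ∀ n x, 0 ≤ f n x) (hC : ∀ x, f 1 x ≤ C)
    (hsub : ∀ m n : ℕ, 1 ≤ m → 1 ≤ n → ∀ x, f (n + m) x ≤ f m x * f n (T^[m] x))
    {NN : ℝ} (hNN : 0 ≤ NN) (n : ℕ) (hn : 1 ≤ n) (x : X) :
    |glog f NN n x| ≤ (NN + Real.log (max C 1)) * n := by
  have hM1 : (0 : ℝ) ≤ Real.log (max C 1) := Real.log_nonneg (le_max_right C 1)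
  have h1 := glog_ge (f := f) NN n x
  have h2 := glog_le hnonneg hC hsub hNN n hn x
  have hn0 : (0:ℝ) ≤ (n:ℝ) := Nat.cast_nonneg n
  rw [abs_le]
  constructor <;> nlinarith [mul_le_mul_of_nonneg_right (le_refl NN) hn0]

lemma glog_subadd (hnonneg : ∀ n x, 0 ≤ f n x)
    (hsub : ∀ m n : ℕ, 1 ≤ m → 1 ≤ n → ∀ x, f (n + m) x ≤ f m x * f n (T^[m] x))
    (NN : ℝ) :
    ∀ m n : ℕ, 1 ≤ m → 1 ≤ n → ∀ x,
      glog f NN (n + m) x ≤ glog f NN m x + glog f NN n (T^[m] x) := by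
  intro m n hm hn x
  have hpos1 := glog_pos_arg (f := f) NN m x hnonneg
  have hpos2 := glog_pos_arg (f := f) NN n (T^[m] x) hnonneg
  have hprod : max (f (n + m) x) (Real.exp (-(NN * ((n + m : ℕ) : ℝ))))
      ≤ (max (f m x) (Real.exp (-(NN * (m : ℝ)))))
        * (max (f n (T^[m] x)) (Real.exp (-(NN * (n : ℝ))))) := by
    apply max_le
    · calc f (n + m) x ≤ f m x * f n (T^[m] x) := hsub m n hm hn x
        _ ≤ _ := by
          apply mul_le_mul (le_max_left _ _) (le_max_left _ _) (hnonneg _ _)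
          exact le_of_lt hpos1
    · have hexp : Real.exp (-(NN * ((n + m : ℕ) : ℝ)))
          = Real.exp (-(NN * (m : ℝ))) * Real.exp (-(NN * (n : ℝ))) := by
        rw [← Real.exp_add]
        congr 1
        push_cast
        ring
      rw [hexp]
      apply mul_le_mul (le_max_right _ _) (le_max_right _ _) (Real.exp_pos _).le
      exact le_of_lt hpos1
  have h := Real.log_le_log (glog_pos_arg (f := f) NN (n + m) x hnonneg) hprod
  rwa [Real.log_mul (ne_of_gt hpos1) (ne_of_gt hpos2)] at h

end GLOG

section USEQ

variable {X : Type*} [MeasurableSpace X]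

/-- The integral sequence of the truncated logarithms (patched at `0`). -/
noncomputable def useq (μ : Measure X) (f : ℕ → X → ℝ) (NN : ℝ) (n : ℕ) : ℝ :=
  if n = 0 then 0 else ∫ x, glog f NN n x ∂μ

variable (μ : Measure X) [IsProbabilityMeasure μ] {T : X → X} {f : ℕ → X → ℝ} {C : ℝ}

lemma useq_eq (NN : ℝ) (n : ℕ) (hn : 1 ≤ n) :
    useq μ f NN n = ∫ x, glog f NN n x ∂μ := by
  unfold useq
  rw [if_neg (by omega)]

lemma glog_integrable (hmeas : ∀ n, Measurable (f n)) (hnonneg : ∀ n x, 0 ≤ f n x)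
    (hC : ∀ x, f 1 x ≤ C)
    (hsub : ∀ m n : ℕ, 1 ≤ m → 1 ≤ n → ∀ x, f (n + m) x ≤ f m x * f n (T^[m] x))
    {NN : ℝ} (hNN : 0 ≤ NN) (n : ℕ) (hn : 1 ≤ n) :
    Integrable (glog f NN n) μ :=
  integrable_of_bound μ (glog_measurable hmeas NN n) ((NN + Real.log (max C 1)) * n)
    (fun x => glog_abs hnonneg hC hsub hNN n hn x)

lemma useq_abs (hmeas : ∀ n, Measurable (f n)) (hnonneg : ∀ n x, 0 ≤ f n x)
    (hC : ∀ x, f 1 x ≤ C)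
    (hsub : ∀ m n : ℕ, 1 ≤ m → 1 ≤ n → ∀ x, f (n + m) x ≤ f m x * f n (T^[m] x))
    {NN : ℝ} (hNN : 0 ≤ NN) (n : ℕ) (hn : 1 ≤ n) :
    |useq μ f NN n| ≤ (NN + Real.log (max C 1)) * n := by
  rw [useq_eq μ NN n hn]
  calc |∫ x, glog f NN n x ∂μ| ≤ ∫ x, |glog f NN n x| ∂μ := by
        simpa [Real.norm_eq_abs] using
          norm_integral_le_integral_norm (μ := μ) (f := fun x => glog f NN n x)
    _ ≤ ∫ x, ((NN + Real.log (max C 1)) * n) ∂μ := by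
        apply integral_mono ((glog_integrable μ hmeas hnonneg hC hsub hNN n hn).abs)
          (integrable_const _)
        exact fun x => glog_abs hnonneg hC hsub hNN n hn x
    _ = (NN + Real.log (max C 1)) * n := by
        rw [integral_const]; simp [measure_univ]

lemma useq_subadditive (hT : MeasurePreserving T μ μ)
    (hmeas : ∀ n, Measurable (f n)) (hnonneg : ∀ n x, 0 ≤ f n x)
    (hC : ∀ x, f 1 x ≤ C)
    (hsub : ∀ m n : ℕ, 1 ≤ m → 1 ≤ n → ∀ x, f (n + m) x ≤ f m x * f n (T^[m] x))
    {NN : ℝ} (hNN : 0 ≤ NN) : Subadditive (useq μ f NN) := by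
  intro m n
  rcases Nat.eq_zero_or_pos m with hm | hm
  · subst hm; simp [useq]
  rcases Nat.eq_zero_or_pos n with hn | hn
  · subst hn; simp [useq]
  rw [useq_eq μ NN m hm, useq_eq μ NN n hn, useq_eq μ NN (m + n) (by omega)]
  have hcomp : Integrable (fun x => glog f NN n (T^[m] x)) μ := by
    apply integrable_of_bound μ (g := fun x => glog f NN n (T^[m] x))
      (by exact (glog_measurable hmeas NN n).comp (hT.iterate m).measurable)
      ((NN + Real.log (max C 1)) * n)
    exact fun x => glog_abs hnonneg hC hsub hNN n hn _
  have h1 : ∫ x, glog f NN (m + n) x ∂μ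
      ≤ ∫ x, (glog f NN m x + glog f NN n (T^[m] x)) ∂μ := by
    apply integral_mono (glog_integrable μ hmeas hnonneg hC hsub hNN (m + n) (by omega))
    · exact (glog_integrable μ hmeas hnonneg hC hsub hNN m hm).add hcomp
    · intro x
      have := glog_subadd hnonneg hsub NN m n hm hn x
      rw [add_comm n m] at this
      exact this
  have h2 : ∫ x, (glog f NN m x + glog f NN n (T^[m] x)) ∂μ
      = (∫ x, glog f NN m x ∂μ) + ∫ x, glog f NN n x ∂μ := by
    rw [integral_add (glog_integrable μ hmeas hnonneg hC hsub hNN m hm) hcomp,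
      integral_comp_iterate hT m (glog_measurable hmeas NN n)]
  linarith [h1, h2.le]

lemma useq_div_bdd (hmeas : ∀ n, Measurable (f n)) (hnonneg : ∀ n x, 0 ≤ f n x)
    (hC : ∀ x, f 1 x ≤ C)
    (hsub : ∀ m n : ℕ, 1 ≤ m → 1 ≤ n → ∀ x, f (n + m) x ≤ f m x * f n (T^[m] x))
    {NN : ℝ} (hNN : 0 ≤ NN) :
    BddBelow (Set.range fun n : ℕ => useq μ f NN n / n) := by
  refine ⟨-(NN + Real.log (max C 1)), ?_⟩
  rintro v ⟨n, rfl⟩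
  have hM1 : (0 : ℝ) ≤ Real.log (max C 1) := Real.log_nonneg (le_max_right C 1)
  simp only
  rcases Nat.eq_zero_or_pos n with hn | hn
  · subst hn
    simp only [useq, if_pos rfl, Nat.cast_zero, div_zero]
    linarith
  have h1 := useq_abs μ hmeas hnonneg hC hsub hNN n hn
  have hn0 : (0 : ℝ) < (n : ℝ) := by exact_mod_cast hn
  rw [abs_le] at h1
  rw [le_div_iff₀ hn0]
  nlinarith [h1.1, hn0]

end USEQ

section DECOMP

lemma reindex_sum (F : ℕ → ℝ) (k n : ℕ) (hk : 1 ≤ k) (hkn : k ≤ n) :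
    ∑ r ∈ Finset.range k, ∑ i ∈ Finset.range ((n - r) / k), F (r + i * k)
      = ∑ j ∈ Finset.range (n - k + 1), F j := by
  rw [Finset.sum_sigma' (Finset.range k) (fun r => Finset.range ((n - r) / k))
    (fun r i => F (r + i * k))]
  refine Finset.sum_nbij' (fun p => p.1 + p.2 * k) (fun j => ⟨j % k, j / k⟩) ?_ ?_ ?_ ?_ ?_
  · rintro ⟨r, i⟩ hp
    simp only [Finset.mem_sigma, Finset.mem_range] at hp
    obtain ⟨hr, hi⟩ := hp
    simp only [Finset.mem_range]
    have h1 : i + 1 ≤ (n - r) / k := hi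
    have h2 : (i + 1) * k ≤ n - r := (Nat.le_div_iff_mul_le (by omega)).mp h1
    rw [Nat.succ_mul] at h2
    omega
  · intro j hj
    simp only [Finset.mem_range] at hj
    simp only [Finset.mem_sigma, Finset.mem_range]
    have h2 : j % k < k := Nat.mod_lt _ (by omega)
    refine ⟨h2, ?_⟩
    have h1 : j % k + j / k * k = j := Nat.mod_add_div' j k
    have h3 : (j / k + 1) * k ≤ n - j % k := by
      rw [Nat.succ_mul]
      omega
    have h4 := (Nat.le_div_iff_mul_le (show 0 < k by omega)).mpr h3
    omega
  · rintro ⟨r, i⟩ hp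
    simp only [Finset.mem_sigma, Finset.mem_range] at hp
    obtain ⟨hr, _⟩ := hp
    have h1 : (r + i * k) % k = r := by
      rw [Nat.add_mul_mod_self_right, Nat.mod_eq_of_lt hr]
    have h2 : (r + i * k) / k = i := by
      rw [mul_comm, Nat.add_mul_div_left _ _ (show 0 < k by omega), Nat.div_eq_of_lt hr,
        zero_add]
    show (⟨(r + i * k) % k, (r + i * k) / k⟩ : (_ : ℕ) × ℕ) = ⟨r, i⟩
    rw [h1, h2]
  · intro j _
    show j % k + j / k * k = j
    rw [Nat.mod_add_div']
  · rintro ⟨r, i⟩ _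
    rfl

end DECOMP

section DECOMP2

variable {X : Type*} [MeasurableSpace X] {T : X → X} {f : ℕ → X → ℝ} {C : ℝ}

lemma glog_blocks (hnonneg : ∀ n x, 0 ≤ f n x)
    (hsub : ∀ m n : ℕ, 1 ≤ m → 1 ≤ n → ∀ x, f (n + m) x ≤ f m x * f n (T^[m] x))
    (NN : ℝ) {k : ℕ} (hk : 1 ≤ k) :
    ∀ q : ℕ, 1 ≤ q → ∀ y, glog f NN (q * k) y
      ≤ ∑ i ∈ Finset.range q, glog f NN k (T^[i * k] y) := by
  intro q
  induction q with
  | zero => omega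
  | succ q IH =>
    intro _ y
    rcases Nat.eq_zero_or_pos q with hq | hq
    · subst hq
      simp
    · have h1 : glog f NN (k + q * k) y ≤ glog f NN (q * k) y + glog f NN k (T^[q * k] y) :=
        glog_subadd hnonneg hsub NN (q * k) k (Nat.mul_pos hq hk) hk y
      have h2 := IH hq y
      have h3 : (q + 1) * k = k + q * k := by ring
      rw [h3, Finset.sum_range_succ]
      linarith
    
lemma glog_offset (hnonneg : ∀ n x, 0 ≤ f n x) (hC : ∀ x, f 1 x ≤ C)
    (hsub : ∀ m n : ℕ, 1 ≤ m → 1 ≤ n → ∀ x, f (n + m) x ≤ f m x * f n (T^[m] x))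
    {NN : ℝ} (hNN : 0 ≤ NN) {k : ℕ} (hk : 1 ≤ k) :
    ∀ n : ℕ, 1 ≤ n → ∀ r : ℕ, r < k → ∀ y,
      glog f NN n y ≤ 2 * (k : ℝ) * (NN + Real.log (max C 1))
        + ∑ i ∈ Finset.range ((n - r) / k), glog f NN k (T^[r + i * k] y) := by
  intro n hn r hr y
  have hc0 : (0 : ℝ) ≤ NN + Real.log (max C 1) := by
    have := Real.log_nonneg (le_max_right C 1); linarith
  set c : ℝ := NN + Real.log (max C 1) with hcdef
  set q : ℕ := (n - r) / k with hqdef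
  rcases Nat.eq_zero_or_pos q with hq0 | hq1
  · -- n < r + k, so n ≤ 2k and the trivial bound works
    have hnrk : n - r < k := by
      by_contra hcon
      push_neg at hcon
      have : 1 ≤ (n - r) / k := (Nat.le_div_iff_mul_le (by omega)).mpr (by omega)
      omega
    have h1 : glog f NN n y ≤ c * n := (abs_le.mp (glog_abs hnonneg hC hsub hNN n hn y)).2
    have h2 : (n : ℝ) ≤ 2 * k := by
      have : n < 2 * k := by omega
      exact_mod_cast this.le
    rw [hq0]
    simp only [Finset.range_zero, Finset.sum_empty, add_zero]
    nlinarith [h1, h2, hc0, Nat.cast_nonneg (α := ℝ) n]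
  · -- main case
    set s : ℕ := n - r - q * k with hsdef
    have hqk : q * k ≤ n - r := by
      rw [hqdef]; exact Nat.div_mul_le_self (n - r) k
    have hkn2 : k ≤ n - r := by
      have := (Nat.le_div_iff_mul_le (show 0 < k by omega)).mp hq1
      omega
    have hsk : s < k := by
      have h1 : (n - r) % k < k := Nat.mod_lt _ (by omega)
      have h2 : q * k + (n - r) % k = n - r := by
        rw [hqdef]
        rw [add_comm]
        exact Nat.mod_add_div' (n - r) k
      omega
    have hrn : r + q * k + s = n := by omega
    -- blocks estimate at the point T^[r] y
    have hblocks := glog_blocks hnonneg hsub NN hk q hq1 (T^[r] y)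
    have hshift : ∀ i : ℕ, T^[i * k] (T^[r] y) = T^[r + i * k] y := by
      intro i
      rw [add_comm r (i * k), Function.iterate_add_apply]
    rw [Finset.sum_congr rfl (fun i _ => by rw [hshift i])] at hblocks
    -- combine, with case analysis on r and s
    have hqk1 : 1 ≤ q * k := Nat.mul_pos hq1 (by omega)
    have hkc : (0:ℝ) ≤ (k:ℝ) := Nat.cast_nonneg k
    have step1 : glog f NN n y ≤ (if r = 0 then 0 else c * k) + glog f NN (q * k + s) (T^[r] y) := by
      rcases Nat.eq_zero_or_pos r with hr0 | hr1
      · subst hr0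
        simp only [if_pos rfl, zero_add, Function.iterate_zero_apply]
        have h9 : q * k + s = n := by omega
        rw [h9]
        simp
      · rw [if_neg (by omega)]
        have h1 : glog f NN ((q * k + s) + r) y
            ≤ glog f NN r y + glog f NN (q * k + s) (T^[r] y) :=
          glog_subadd hnonneg hsub NN r (q * k + s) hr1 (by omega) y
        have h2 : (q * k + s) + r = n := by omega
        rw [h2] at h1
        have h3 : glog f NN r y ≤ c * r := (abs_le.mp (glog_abs hnonneg hC hsub hNN r hr1 y)).2
        have h4 : (r : ℝ) ≤ (k : ℝ) := by exact_mod_cast hr.le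
        nlinarith [h1, h3, h4, hc0]
    have step2 : glog f NN (q * k + s) (T^[r] y)
        ≤ (if s = 0 then 0 else c * k) + glog f NN (q * k) (T^[r] y) := by
      rcases Nat.eq_zero_or_pos s with hs0 | hs1
      · rw [hs0]
        simp
      · rw [if_neg (by omega)]
        have h1 : glog f NN (s + q * k) (T^[r] y)
            ≤ glog f NN (q * k) (T^[r] y) + glog f NN s (T^[q * k] (T^[r] y)) :=
          glog_subadd hnonneg hsub NN (q * k) s hqk1 hs1 (T^[r] y)
        have h2 : s + q * k = q * k + s := by omega
        rw [h2] at h1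
        have h3 : glog f NN s (T^[q * k] (T^[r] y)) ≤ c * s :=
          (abs_le.mp (glog_abs hnonneg hC hsub hNN s hs1 _)).2
        have h4 : (s : ℝ) ≤ (k : ℝ) := by exact_mod_cast hsk.le
        nlinarith [h1, h3, h4, hc0]
    have hif1 : (if r = 0 then (0:ℝ) else c * k) ≤ c * k := by
      split
      · exact mul_nonneg hc0 hkc
      · exact le_rfl
    have hif2 : (if s = 0 then (0:ℝ) else c * k) ≤ c * k := by
      split
      · exact mul_nonneg hc0 hkc
      · exact le_rfl
    calc glog f NN n y
        ≤ (if r = 0 then 0 else c * k) + glog f NN (q * k + s) (T^[r] y) := step1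
      _ ≤ (if r = 0 then 0 else c * k) + ((if s = 0 then 0 else c * k)
            + glog f NN (q * k) (T^[r] y)) := by linarith [step2]
      _ ≤ c * k + (c * k + ∑ i ∈ Finset.range q, glog f NN k (T^[r + i * k] y)) := by
          linarith [hif1, hif2, hblocks]
      _ ≤ 2 * (k : ℝ) * c + ∑ i ∈ Finset.range q, glog f NN k (T^[r + i * k] y) := by
          nlinarith [hkc, hc0]

lemma glog_avg (hnonneg : ∀ n x, 0 ≤ f n x) (hC : ∀ x, f 1 x ≤ C)
    (hsub : ∀ m n : ℕ, 1 ≤ m → 1 ≤ n → ∀ x, f (n + m) x ≤ f m x * f n (T^[m] x))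
    {NN : ℝ} (hNN : 0 ≤ NN) {k : ℕ} (hk : 1 ≤ k) :
    ∀ n : ℕ, k ≤ n → ∀ y,
      (k : ℝ) * glog f NN n y ≤ 2 * (k : ℝ) * (k : ℝ) * (NN + Real.log (max C 1))
        + ∑ j ∈ Finset.range (n - k + 1), glog f NN k (T^[j] y) := by
  intro n hkn y
  have hsum : ∀ r ∈ Finset.range k, glog f NN n y
      ≤ 2 * (k : ℝ) * (NN + Real.log (max C 1))
        + ∑ i ∈ Finset.range ((n - r) / k), glog f NN k (T^[r + i * k] y) := by
    intro r hrmem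
    exact glog_offset hnonneg hC hsub hNN hk n (by omega) r (Finset.mem_range.mp hrmem) y
  have h1 := Finset.sum_le_sum hsum
  rw [Finset.sum_const, Finset.card_range, nsmul_eq_mul] at h1
  rw [Finset.sum_add_distrib, Finset.sum_const, Finset.card_range, nsmul_eq_mul] at h1
  rw [reindex_sum (fun j => glog f NN k (T^[j] y)) k n hk hkn] at h1
  calc (k : ℝ) * glog f NN n y
      ≤ (k : ℝ) * (2 * (k : ℝ) * (NN + Real.log (max C 1)))
        + ∑ j ∈ Finset.range (n - k + 1), glog f NN k (T^[j] y) := h1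
    _ = 2 * (k : ℝ) * (k : ℝ) * (NN + Real.log (max C 1))
        + ∑ j ∈ Finset.range (n - k + 1), glog f NN k (T^[j] y) := by ring_nf

end DECOMP2

section HELPERS

lemma coe_ennreal_eq_coe_toReal {x : ℝ≥0∞} (hx : x ≠ ⊤) :
    ((x : ℝ≥0∞) : EReal) = ((x.toReal : ℝ) : EReal) := by
  conv_lhs => rw [← ENNReal.ofReal_toReal hx]
  rw [EReal.coe_ennreal_ofReal, max_eq_left ENNReal.toReal_nonneg]

lemma ereal_coe_max (a b : ℝ) : ((max a b : ℝ) : EReal) = max (a : EReal) (b : EReal) := by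
  rcases le_total a b with h | h
  · rw [max_eq_right h, max_eq_right (EReal.coe_le_coe_iff.mpr h)]
  · rw [max_eq_left h, max_eq_left (EReal.coe_le_coe_iff.mpr h)]

lemma epos_elog_eq (r : ℝ) (hr : 0 ≤ r) :
    epos (elog r) = ENNReal.ofReal (max (Real.log r) 0) := by
  rcases eq_or_lt_of_le hr with h0 | hpos
  · rw [← h0]
    have h1 : elog 0 = (⊥ : EReal) := by
      unfold elog
      simp
    rw [h1]
    unfold epos
    rw [if_neg (by simp)]
    simp [Real.log_zero]
  · have h1 : elog r = ((Real.log r : ℝ) : EReal) := by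
      unfold elog
      rw [ENNReal.log_ofReal_of_pos hpos]
    rw [h1]
    unfold epos
    rw [if_neg (EReal.coe_ne_top _), EReal.toReal_coe]
    rcases le_total (Real.log r) 0 with h | h
    · rw [ENNReal.ofReal_of_nonpos h, max_eq_right h, ENNReal.ofReal_zero]
    · rw [max_eq_left h]

lemma epos_neg_elog_pos {r : ℝ} (hpos : 0 < r) :
    epos (-(elog r)) = ENNReal.ofReal (max (-(Real.log r)) 0) := by
  have h1 : elog r = ((Real.log r : ℝ) : EReal) := by
    unfold elog
    rw [ENNReal.log_ofReal_of_pos hpos]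
  rw [h1, ← EReal.coe_neg]
  unfold epos
  rw [if_neg (EReal.coe_ne_top _), EReal.toReal_coe]
  rcases le_total (-(Real.log r)) 0 with h | h
  · rw [ENNReal.ofReal_of_nonpos h, max_eq_right h, ENNReal.ofReal_zero]
  · rw [max_eq_left h]

lemma epos_neg_elog_zero : epos (-(elog 0)) = ⊤ := by
  have h1 : elog 0 = (⊥ : EReal) := by
    unfold elog
    simp
  rw [h1]
  show epos ⊤ = ⊤
  unfold epos
  rw [if_pos rfl]

end HELPERS


section GLOG2

variable {X : Type*} [MeasurableSpace X] {T : X → X} {f : ℕ → X → ℝ} {C : ℝ}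

lemma glog_anti (f : ℕ → X → ℝ) {NN NN' : ℝ} (h : NN ≤ NN') (n : ℕ) (x : X) :
    glog f NN' n x ≤ glog f NN n x := by
  apply Real.log_le_log (lt_of_lt_of_le (Real.exp_pos _) (le_max_right _ _))
  apply max_le_max le_rfl
  apply Real.exp_le_exp.mpr
  have : NN * n ≤ NN' * n := mul_le_mul_of_nonneg_right h (Nat.cast_nonneg n)
  linarith

lemma glog_ge_log (f : ℕ → X → ℝ) (NN : ℝ) (n : ℕ) {x : X} (hf : 0 < f n x) :
    Real.log (f n x) ≤ glog f NN n x :=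
  Real.log_le_log hf (le_max_left _ _)

lemma glog_eq_of_gt (f : ℕ → X → ℝ) {NN NN' : ℝ} (h : NN ≤ NN') (n : ℕ) (x : X)
    (hgt : -(NN * n) < glog f NN n x) : glog f NN' n x = glog f NN n x := by
  have hpos : 0 < max (f n x) (Real.exp (-(NN * (n : ℝ)))) :=
    lt_of_lt_of_le (Real.exp_pos _) (le_max_right _ _)
  have hG : Real.exp (-(NN * (n : ℝ))) < max (f n x) (Real.exp (-(NN * (n : ℝ)))) := by
    calc Real.exp (-(NN * (n : ℝ))) < Real.exp (glog f NN n x) := Real.exp_lt_exp.mpr hgt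
      _ = max (f n x) (Real.exp (-(NN * (n : ℝ)))) := Real.exp_log hpos
  have hf : Real.exp (-(NN * (n : ℝ))) < f n x := by
    rcases max_cases (f n x) (Real.exp (-(NN * (n : ℝ)))) with ⟨heq, _⟩ | ⟨heq, _⟩
    · rwa [heq] at hG
    · rw [heq] at hG; exact absurd hG (lt_irrefl _)
  have h2 : Real.exp (-(NN' * (n : ℝ))) ≤ f n x := by
    refine le_trans (Real.exp_le_exp.mpr ?_) hf.le
    have : NN * n ≤ NN' * n := mul_le_mul_of_nonneg_right h (Nat.cast_nonneg n)
    linarith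
  unfold glog
  rw [max_eq_left hf.le, max_eq_left h2]

lemma glog_pospart (hnonneg : ∀ n x, 0 ≤ f n x) {NN : ℝ} (hNN : 0 ≤ NN)
    (n : ℕ) (x : X) :
    max (glog f NN n x) 0 = max (Real.log (f n x)) 0 := by
  have hexp1 : Real.exp (-(NN * (n : ℝ))) ≤ 1 := by
    rw [Real.exp_le_one_iff]
    have : (0:ℝ) ≤ NN * n := by positivity
    linarith
  rcases le_or_gt 1 (f n x) with h1 | h1
  · have heq : max (f n x) (Real.exp (-(NN * (n : ℝ)))) = f n x :=
      max_eq_left (le_trans hexp1 h1)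
    unfold glog
    rw [heq]
  · have hle1 : glog f NN n x ≤ 0 := by
      apply Real.log_nonpos
      · exact le_trans (Real.exp_pos _).le (le_max_right _ _)
      · exact max_le h1.le hexp1
    have hle2 : Real.log (f n x) ≤ 0 := by
      rcases eq_or_lt_of_le (hnonneg n x) with h0 | h0
      · rw [← h0, Real.log_zero]
      · exact Real.log_nonpos (hnonneg n x) h1.le
    rw [max_eq_right hle1, max_eq_right hle2]

lemma max_neg_eq (a : ℝ) : max (-a) 0 = max a 0 - a := by
  rcases le_total a 0 with h | h
  · rw [max_eq_left (neg_nonneg.mpr h), max_eq_right h]; ring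
  · rw [max_eq_right (neg_nonpos.mpr h), max_eq_left h]; ring

end GLOG2


section EINT

variable {X : Type*} [MeasurableSpace X] {T : X → X}

lemma eintegral_term_eq (μ : Measure X) [IsProbabilityMeasure μ]
    (f : ℕ → X → ℝ) (hmeas : ∀ n, Measurable (f n)) (hnonneg : ∀ n x, 0 ≤ f n x)
    (C : ℝ) (hC : ∀ x, f 1 x ≤ C)
    (hsub : ∀ m n : ℕ, 1 ≤ m → 1 ≤ n → ∀ x, f (n + m) x ≤ f m x * f n (T^[m] x))
    (N : ℝ) (hN : 0 < N) (αN : ℝ) (n : ℕ) (hn : 1 ≤ n)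
    (hint : ∀ j : ℕ, αN * n ≤ useq μ f (N + (j : ℝ)) n) :
    ∃ v : ℝ, αN ≤ v ∧ v ≤ Real.log (max C 1) ∧
      (((n : ℝ)⁻¹ : ℝ) : EReal) * eintegral μ (fun x => elog (f n x)) = (v : EReal) := by
  have hL0 : (0:ℝ) ≤ Real.log (max C 1) := Real.log_nonneg (le_max_right C 1)
  set L : ℝ := Real.log (max C 1) with hLdef
  have hn0 : (0:ℝ) < (n:ℝ) := by exact_mod_cast hn
  -- the positive part
  have hposf_meas : Measurable (fun x => max (Real.log (f n x)) 0) :=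
    (Real.measurable_log.comp (hmeas n)).max measurable_const
  have hposf_bd : ∀ x, max (Real.log (f n x)) 0 ≤ (n:ℝ) * L := by
    intro x
    have hnL : (0:ℝ) ≤ (n:ℝ) * L := by positivity
    apply max_le _ hnL
    rcases eq_or_lt_of_le (hnonneg n x) with h0 | h0
    · rw [← h0, Real.log_zero]; exact hnL
    · have h1 : f n x ≤ (max C 1) ^ n := f_le_pow hnonneg hC hsub n hn x
      have h2 := Real.log_le_log h0 h1
      rwa [Real.log_pow] at h2
  have hposf_int : Integrable (fun x => max (Real.log (f n x)) 0) μ := by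
    apply integrable_of_bound μ hposf_meas ((n:ℝ) * L)
    intro x
    rw [abs_of_nonneg (le_max_right _ _)]
    exact hposf_bd x
  set Pr : ℝ := ∫ x, max (Real.log (f n x)) 0 ∂μ with hPrdef
  have hPr0 : 0 ≤ Pr := integral_nonneg (fun x => le_max_right _ _)
  have hPrle : Pr ≤ (n:ℝ) * L := by
    rw [hPrdef]
    calc ∫ x, max (Real.log (f n x)) 0 ∂μ ≤ ∫ _x, (n:ℝ) * L ∂μ :=
          integral_mono hposf_int (integrable_const _) hposf_bd
      _ = (n:ℝ) * L := by rw [integral_const]; simp [measure_univ]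
  -- the glog integrability for each j
  have hNNj : ∀ j : ℕ, (0:ℝ) ≤ N + (j : ℝ) := by
    intro j
    have : (0:ℝ) ≤ (j:ℝ) := Nat.cast_nonneg j
    linarith
  have hglog_int : ∀ j : ℕ, Integrable (glog f (N + (j:ℝ)) n) μ := fun j =>
    glog_integrable μ hmeas hnonneg hC hsub (hNNj j) n hn
  -- positive parts agree
  have hpos_eq : ∀ (j : ℕ) x, max (glog f (N + (j:ℝ)) n x) 0 = max (Real.log (f n x)) 0 :=
    fun j x => glog_pospart hnonneg (hNNj j) n x
  -- value of the positive lintegral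
  have hP : ∫⁻ x, epos (elog (f n x)) ∂μ = ENNReal.ofReal Pr := by
    have h1 : ∀ x, epos (elog (f n x)) = ENNReal.ofReal (max (Real.log (f n x)) 0) :=
      fun x => epos_elog_eq _ (hnonneg n x)
    rw [lintegral_congr h1]
    exact (MeasureTheory.ofReal_integral_eq_lintegral_ofReal hposf_int
      (Filter.Eventually.of_forall fun x => le_max_right _ _)).symm
  -- bound on the negative lintegral
  have hQle : ∫⁻ x, epos (-(elog (f n x))) ∂μ ≤ ENNReal.ofReal (Pr - αN * n) := by
    have hmono : Monotone (fun j : ℕ => fun x =>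
        ENNReal.ofReal (max (-(glog f (N + (j:ℝ)) n x)) 0)) := by
      intro j j' hjj
      intro x
      apply ENNReal.ofReal_le_ofReal
      apply max_le_max _ le_rfl
      have := glog_anti f (show N + (j:ℝ) ≤ N + (j':ℝ) by
        have : (j:ℝ) ≤ (j':ℝ) := by exact_mod_cast hjj
        linarith) n x
      linarith
    have hsup : ∀ x, (⨆ j : ℕ, ENNReal.ofReal (max (-(glog f (N + (j:ℝ)) n x)) 0))
        = epos (-(elog (f n x))) := by
      intro x
      rcases eq_or_lt_of_le (hnonneg n x) with h0 | h0
      · -- f n x = 0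
        have hzero : f n x = 0 := h0.symm
        have hg : ∀ j : ℕ, glog f (N + (j:ℝ)) n x = -((N + (j:ℝ)) * n) := by
          intro j
          unfold glog
          rw [hzero, max_eq_right (Real.exp_pos _).le, Real.log_exp]
        have hterm : ∀ j : ℕ, ENNReal.ofReal (max (-(glog f (N + (j:ℝ)) n x)) 0)
            = ENNReal.ofReal ((N + (j:ℝ)) * n) := by
          intro j
          rw [hg j, neg_neg, max_eq_left (by positivity)]
        rw [hzero, epos_neg_elog_zero]
        rw [iSup_congr hterm]
        rw [iSup_eq_top]
        intro b hb
        obtain ⟨j, hj⟩ := exists_nat_ge (b.toReal + 1)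
        refine ⟨j, ?_⟩
        rw [ENNReal.lt_ofReal_iff_toReal_lt hb.ne]
        have hn1 : (1:ℝ) ≤ (n:ℝ) := by exact_mod_cast hn
        have h2 : (N + (j:ℝ)) * n ≥ (j:ℝ) := by
          nlinarith [mul_nonneg (Nat.cast_nonneg (α := ℝ) j)
            (show (0:ℝ) ≤ (n:ℝ) - 1 by linarith), mul_pos hN hn0]
        linarith
      · -- f n x > 0
        rw [epos_neg_elog_pos h0]
        apply le_antisymm
        · apply iSup_le
          intro j
          apply ENNReal.ofReal_le_ofReal
          apply max_le_max _ le_rfl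
          have := glog_ge_log f (N + (j:ℝ)) n h0
          linarith
        · obtain ⟨j₀, hj₀⟩ := exists_nat_ge (-(Real.log (f n x)))
          have hle : -((N + (j₀:ℝ)) * n) ≤ Real.log (f n x) := by
            have hn1 : (1:ℝ) ≤ (n:ℝ) := by exact_mod_cast hn
            have h2 : (N + (j₀:ℝ)) * n ≥ (j₀:ℝ) := by
              nlinarith [mul_nonneg (Nat.cast_nonneg (α := ℝ) j₀)
                (show (0:ℝ) ≤ (n:ℝ) - 1 by linarith), mul_pos hN hn0]
            linarith
          have hexp : Real.exp (-((N + (j₀:ℝ)) * n)) ≤ f n x := by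
            calc Real.exp (-((N + (j₀:ℝ)) * n)) ≤ Real.exp (Real.log (f n x)) :=
                  Real.exp_le_exp.mpr hle
              _ = f n x := Real.exp_log h0
          have hgeq : glog f (N + (j₀:ℝ)) n x = Real.log (f n x) := by
            unfold glog
            rw [max_eq_left hexp]
          exact le_iSup_of_le j₀ (le_of_eq (by rw [hgeq]))
    calc ∫⁻ x, epos (-(elog (f n x))) ∂μ
        = ∫⁻ x, ⨆ j : ℕ, ENNReal.ofReal (max (-(glog f (N + (j:ℝ)) n x)) 0) ∂μ :=
          lintegral_congr (fun x => (hsup x).symm)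
      _ = ⨆ j : ℕ, ∫⁻ x, ENNReal.ofReal (max (-(glog f (N + (j:ℝ)) n x)) 0) ∂μ := by
          apply lintegral_iSup
          · intro j
            exact ENNReal.measurable_ofReal.comp
              (((glog_measurable hmeas _ n).neg).max measurable_const)
          · exact hmono
      _ ≤ ENNReal.ofReal (Pr - αN * n) := by
          apply iSup_le
          intro j
          have hqj_int : Integrable (fun x => max (-(glog f (N + (j:ℝ)) n x)) 0) μ := by
            apply integrable_of_bound μ
              (((glog_measurable hmeas _ n).neg).max measurable_const)
              (((N + (j:ℝ)) + L) * n)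
            intro x
            rw [abs_of_nonneg (le_max_right _ _)]
            have := abs_le.mp (glog_abs hnonneg hC hsub (hNNj j) n hn x)
            apply max_le (by show -(glog f (N + (j:ℝ)) n x) ≤ _; linarith [this.1]) (by nlinarith [hNNj j, hL0, hn0])
          rw [← MeasureTheory.ofReal_integral_eq_lintegral_ofReal hqj_int
            (Filter.Eventually.of_forall fun x => le_max_right _ _)]
          apply ENNReal.ofReal_le_ofReal
          have hid : ∀ x, max (-(glog f (N + (j:ℝ)) n x)) 0
              = max (Real.log (f n x)) 0 - glog f (N + (j:ℝ)) n x := by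
            intro x
            rw [max_neg_eq, hpos_eq j x]
          rw [integral_congr_ae (Filter.Eventually.of_forall hid),
            integral_sub hposf_int (hglog_int j)]
          have h3 : αN * n ≤ ∫ x, glog f (N + (j:ℝ)) n x ∂μ := by
            have := hint j
            rwa [useq_eq μ _ n hn] at this
          rw [← hPrdef]
          linarith
  -- assemble
  have hQne : (∫⁻ x, epos (-(elog (f n x))) ∂μ) ≠ ⊤ :=
    ne_top_of_le_ne_top ENNReal.ofReal_ne_top hQle
  have hPrQ : 0 ≤ Pr - αN * n := by
    have h1 := hint 0
    rw [useq_eq μ _ n hn] at h1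
    have h2 : ∫ x, glog f (N + ((0:ℕ):ℝ)) n x ∂μ ≤ Pr := by
      rw [hPrdef]
      apply integral_mono (hglog_int 0) hposf_int
      intro x
      calc glog f (N + ((0:ℕ):ℝ)) n x ≤ max (glog f (N + ((0:ℕ):ℝ)) n x) 0 := le_max_left _ _
        _ = max (Real.log (f n x)) 0 := hpos_eq 0 x
    linarith
  set Qr : ℝ := (∫⁻ x, epos (-(elog (f n x))) ∂μ).toReal with hQrdef
  have hQr0 : 0 ≤ Qr := ENNReal.toReal_nonneg
  have hQrle : Qr ≤ Pr - αN * n := by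
    rw [hQrdef]
    exact ENNReal.toReal_le_of_le_ofReal hPrQ hQle
  have heq : eintegral μ (fun x => elog (f n x)) = ((Pr - Qr : ℝ) : EReal) := by
    unfold eintegral
    rw [hP, coe_ennreal_eq_coe_toReal (ENNReal.ofReal_ne_top),
      coe_ennreal_eq_coe_toReal hQne, ENNReal.toReal_ofReal hPr0, ← hQrdef, ← EReal.coe_sub]
  refine ⟨(n:ℝ)⁻¹ * (Pr - Qr), ?_, ?_, ?_⟩
  · rw [le_inv_mul_iff₀ hn0]
    linarith
  · rw [inv_mul_le_iff₀ hn0]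
    nlinarith [hQr0, hPrle, hL0]
  · rw [heq, ← EReal.coe_mul]

end EINT


section LIMLE

variable {X : Type*} [MeasurableSpace X]

lemma useq_lim_le_toReal (μ : Measure X) [IsProbabilityMeasure μ]
    (T : X → X) (hT : Ergodic T μ)
    (f : ℕ → X → ℝ) (hmeas : ∀ n, Measurable (f n)) (hnonneg : ∀ n x, 0 ≤ f n x)
    (C : ℝ) (hC : ∀ x, f 1 x ≤ C)
    (hsub : ∀ m n : ℕ, 1 ≤ m → 1 ≤ n → ∀ x, f (n + m) x ≤ f m x * f n (T^[m] x))
    (α : EReal)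
    (hα : Tendsto (fun n : ℕ => (((n : ℝ)⁻¹ : ℝ) : EReal) *
        eintegral μ (fun x => elog (f n x))) atTop (nhds α))
    (N : ℝ) (hN : 0 < N) (hu : Subadditive (useq μ f N)) :
    hu.lim ≤ (max α ((-N : ℝ) : EReal)).toReal := by
  have hL0 : (0:ℝ) ≤ Real.log (max C 1) := Real.log_nonneg (le_max_right C 1)
  have hbdd := useq_div_bdd μ hmeas hnonneg hC hsub hN.le
  rcases le_or_gt hu.lim (-N) with hle | hgt
  · -- easy branch : -N ≤ toReal (max α (-N))
    have h1 : ((-N : ℝ) : EReal) ≤ max α ((-N:ℝ):EReal) := le_max_right _ _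
    rcases eq_or_ne (max α ((-N:ℝ):EReal)) ⊤ with htop | hne
    · rw [htop]
      rw [EReal.toReal_top]
      linarith
    · have h2 := EReal.toReal_le_toReal h1 (EReal.coe_ne_bot _) hne
      rw [EReal.toReal_coe] at h2
      linarith
  · -- main branch
    have hts : ∀ n : ℕ, 1 ≤ n → hu.lim * n ≤ ∫ x, glog f N n x ∂μ := by
      intro n hn
      have h1 := hu.lim_le_div hbdd (show n ≠ 0 by omega)
      rw [useq_eq μ N n hn] at h1
      have hn0 : (0:ℝ) < (n:ℝ) := by exact_mod_cast hn
      rw [le_div_iff₀ hn0] at h1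
      linarith [h1]
    have hKW := kw_liminf μ T hT (glog f N) (glog_measurable hmeas N) (N + Real.log (max C 1))
      (by linarith) (fun n hn x => glog_abs hnonneg hC hsub hN.le n hn x)
      (glog_subadd hnonneg hsub N) hu.lim hts
    obtain ⟨δ, hδdef⟩ : ∃ v : ℝ, v = (hu.lim + N)/2 := ⟨_, rfl⟩
    have hδpos : 0 < δ := by rw [hδdef]; linarith
    have hδN : -N < hu.lim - δ := by rw [hδdef]; linarith
    obtain ⟨A, hAdef⟩ : ∃ A : ℕ → Set X,
        A = fun n => {x | glog f N n x < (hu.lim - δ) * n} := ⟨_, rfl⟩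
    have hAmem : ∀ n x, x ∈ A n ↔ glog f N n x < (hu.lim - δ) * n := by
      intro n x; rw [hAdef]; exact Iff.rfl
    have hAm : ∀ n, MeasurableSet (A n) := by
      intro n; rw [hAdef]
      exact measurableSet_lt (glog_measurable hmeas N n) measurable_const
    obtain ⟨D, hDdef⟩ : ∃ D : ℕ → Set X, D = fun n => ⋃ j : ℕ, A (n + j) := ⟨_, rfl⟩
    have hDm : ∀ n, MeasurableSet (D n) := by
      intro n; rw [hDdef]; exact MeasurableSet.iUnion fun j => hAm _
    have hDanti : Antitone D := by
      intro m m' hmm'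
      rw [hDdef]
      intro x hx
      simp only [Set.mem_iUnion] at hx ⊢
      obtain ⟨j, hj⟩ := hx
      exact ⟨(m' - m) + j, by rw [show m + ((m' - m) + j) = m' + j by omega]; exact hj⟩
    have hDint : μ (⋂ n, D n) = 0 := by
      rw [measure_eq_zero_iff_ae_notMem]
      filter_upwards [hKW] with x hx hmem
      obtain ⟨n₀, hn₀⟩ := eventually_atTop.mp (hx δ hδpos)
      have hxD := Set.mem_iInter.mp hmem n₀
      rw [hDdef] at hxD
      obtain ⟨j, hj⟩ := Set.mem_iUnion.mp hxD
      rw [hAmem] at hj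
      have h2 := hn₀ (n₀ + j) (by omega)
      linarith
    have hDto : Tendsto (fun n => μ (D n)) atTop (𝓝 0) := by
      have h5 := tendsto_measure_iInter_atTop (fun n => (hDm n).nullMeasurableSet) hDanti
        ⟨0, measure_ne_top μ _⟩
      rw [hDint] at h5
      exact h5
    have hAD : ∀ n, μ (A n) ≤ μ (D n) := by
      intro n
      apply measure_mono
      intro x hx
      rw [hDdef]
      exact Set.mem_iUnion.mpr ⟨0, by rw [Nat.add_zero]; exact hx⟩
    have hA0 : Tendsto (fun n => μ (A n)) atTop (𝓝 0) :=
      tendsto_of_tendsto_of_tendsto_of_le_of_le tendsto_const_nhds hDto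
        (fun n => zero_le) hAD
    have hAreal : Tendsto (fun n => (μ (A n)).toReal) atTop (𝓝 0) := by
      have h6 := (ENNReal.tendsto_toReal (by simp : (0:ℝ≥0∞) ≠ ⊤)).comp hA0
      exact h6
    -- per-j lower bound for the truncated integrals
    have hjbound : ∀ j : ℕ, ∀ n : ℕ, 1 ≤ n → hu.lim * n ≤ useq μ f (N + (j:ℝ)) n := by
      intro j
      have hj0 : (0:ℝ) ≤ (j:ℝ) := Nat.cast_nonneg j
      have hNNj : (0:ℝ) ≤ N + (j:ℝ) := by linarith
      have hNlej : N ≤ N + (j:ℝ) := by linarith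
      have hu' := useq_subadditive μ hT.toMeasurePreserving hmeas hnonneg hC hsub hNNj
      have hbdd' := useq_div_bdd μ hmeas hnonneg hC hsub hNNj
      have hdiff : ∀ n : ℕ, 1 ≤ n → useq μ f N n - useq μ f (N + (j:ℝ)) n
          ≤ ((N + (j:ℝ)) + Real.log (max C 1)) * n * (μ (A n)).toReal := by
        intro n hn
        have hn0 : (0:ℝ) < (n:ℝ) := by exact_mod_cast hn
        have hpt : ∀ x, glog f N n x - glog f (N + (j:ℝ)) n x
            ≤ Set.indicator (A n) (fun _ => ((N + (j:ℝ)) + Real.log (max C 1)) * n) x := by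
          intro x
          by_cases hx : x ∈ A n
          · rw [Set.indicator_of_mem hx]
            have h1 := glog_le hnonneg hC hsub hN.le n hn x
            have h2 := glog_ge (f := f) (N + (j:ℝ)) n x
            nlinarith [h1, h2]
          · rw [Set.indicator_of_notMem hx]
            have hxge : (hu.lim - δ) * n ≤ glog f N n x := by
              rw [hAmem] at hx
              linarith [not_lt.mp hx]
            have hgt2 : -(N * n) < glog f N n x := by
              nlinarith [mul_lt_mul_of_pos_right hδN hn0]
            rw [glog_eq_of_gt f hNlej n x hgt2]
            simp
        rw [useq_eq μ N n hn, useq_eq μ _ n hn]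
        have hglogN_int := glog_integrable μ hmeas hnonneg hC hsub hN.le n hn
        have hglogj_int := glog_integrable μ hmeas hnonneg hC hsub hNNj n hn
        have hind_int : Integrable
            (Set.indicator (A n) (fun _ => ((N + (j:ℝ)) + Real.log (max C 1)) * n)) μ :=
          (integrable_const _).indicator (hAm n)
        have h6 : ∫ x, (glog f N n x - glog f (N + (j:ℝ)) n x) ∂μ
            ≤ ∫ x, Set.indicator (A n)
                (fun _ => ((N + (j:ℝ)) + Real.log (max C 1)) * n) x ∂μ :=
          integral_mono (hglogN_int.sub hglogj_int) hind_int hpt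
        rw [integral_sub hglogN_int hglogj_int, integral_indicator_const _ (hAm n),
          smul_eq_mul] at h6
        simp only [Measure.real] at h6
        nlinarith [h6]
      have hle' : ∀ n : ℕ, 1 ≤ n → useq μ f (N + (j:ℝ)) n ≤ useq μ f N n := by
        intro n hn
        rw [useq_eq μ _ n hn, useq_eq μ N n hn]
        exact integral_mono (glog_integrable μ hmeas hnonneg hC hsub hNNj n hn)
          (glog_integrable μ hmeas hnonneg hC hsub hN.le n hn)
          (fun x => glog_anti f hNlej n x)
      have herr : Tendsto (fun n : ℕ =>
          ((N + (j:ℝ)) + Real.log (max C 1)) * (μ (A n)).toReal) atTop (𝓝 0) := by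
        have h7 := hAreal.const_mul ((N + (j:ℝ)) + Real.log (max C 1))
        simpa using h7
      have hlow : Tendsto (fun n : ℕ => useq μ f N n / n
          - ((N + (j:ℝ)) + Real.log (max C 1)) * (μ (A n)).toReal) atTop (𝓝 hu.lim) := by
        have h7 := (hu.tendsto_lim hbdd).sub herr
        simpa using h7
      have hsq : Tendsto (fun n : ℕ => useq μ f (N + (j:ℝ)) n / n) atTop (𝓝 hu.lim) := by
        apply tendsto_of_tendsto_of_tendsto_of_le_of_le' hlow (hu.tendsto_lim hbdd)
        · filter_upwards [eventually_ge_atTop 1] with n hn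
          have hn0 : (0:ℝ) < (n:ℝ) := by exact_mod_cast hn
          have h7 := hdiff n hn
          have h8 : (useq μ f N n - useq μ f (N + (j:ℝ)) n) / n
              ≤ ((N + (j:ℝ)) + Real.log (max C 1)) * (μ (A n)).toReal := by
            rw [div_le_iff₀ hn0]
            nlinarith [h7]
          rw [sub_div] at h8
          linarith
        · filter_upwards [eventually_ge_atTop 1] with n hn
          have hn0 : (0:ℝ) < (n:ℝ) := by exact_mod_cast hn
          have h9 := hle' n hn
          gcongr
      have hlimeq : hu'.lim = hu.lim :=
        tendsto_nhds_unique (hu'.tendsto_lim hbdd') hsq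
      intro n hn
      have h1 := hu'.lim_le_div hbdd' (show n ≠ 0 by omega)
      rw [hlimeq] at h1
      have hn0 : (0:ℝ) < (n:ℝ) := by exact_mod_cast hn
      rw [le_div_iff₀ hn0] at h1
      linarith
    -- the terms of the sequence defining α
    have hterm : ∀ n : ℕ, 1 ≤ n → ∃ v : ℝ, hu.lim ≤ v ∧ v ≤ Real.log (max C 1) ∧
        (((n:ℝ)⁻¹ : ℝ) : EReal) * eintegral μ (fun x => elog (f n x)) = (v : EReal) :=
      fun n hn => eintegral_term_eq μ f hmeas hnonneg C hC hsub N hN hu.lim n hn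
        (fun j => hjbound j n hn)
    have hαge : ((hu.lim : ℝ) : EReal) ≤ α := by
      apply ge_of_tendsto hα
      filter_upwards [eventually_ge_atTop 1] with n hn
      obtain ⟨v, hv1, hv2, hv3⟩ := hterm n hn
      rw [hv3]
      exact_mod_cast hv1
    have hαle : α ≤ ((Real.log (max C 1) : ℝ) : EReal) := by
      apply le_of_tendsto hα
      filter_upwards [eventually_ge_atTop 1] with n hn
      obtain ⟨v, hv1, hv2, hv3⟩ := hterm n hn
      rw [hv3]
      exact_mod_cast hv2
    have hαbot : α ≠ ⊥ := (lt_of_lt_of_le (EReal.bot_lt_coe hu.lim) hαge).ne'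
    have hαtop : α ≠ ⊤ := (lt_of_le_of_lt hαle (EReal.coe_lt_top _)).ne
    have hcoe : ((α.toReal : ℝ) : EReal) = α := EReal.coe_toReal hαtop hαbot
    have h9 : hu.lim ≤ α.toReal := by
      rw [← hcoe] at hαge
      exact_mod_cast hαge
    have h10 : max α ((-N:ℝ):EReal) = ((max α.toReal (-N) : ℝ) : EReal) := by
      conv_lhs => rw [← hcoe]
      rw [ereal_coe_max]
    rw [h10, EReal.toReal_coe]
    exact le_trans h9 (le_max_left _ _)

end LIMLE


section BSUM

variable {X : Type*} [MeasurableSpace X]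

/-- Birkhoff sums of the truncated logarithm at scale `k`. -/
noncomputable def bsum (T : X → X) (f : ℕ → X → ℝ) (NN : ℝ) (k j : ℕ) (x : X) : ℝ :=
  ∑ i ∈ Finset.range j, glog f NN k (T^[i] x)

variable {T : X → X} {f : ℕ → X → ℝ} {C : ℝ}

lemma bsum_measurable (hT : Measurable T) (hmeas : ∀ n, Measurable (f n)) (NN : ℝ)
    (k j : ℕ) : Measurable (bsum T f NN k j) := by
  unfold bsum
  apply Finset.measurable_sum
  intro i _
  exact (glog_measurable hmeas NN k).comp (hT.iterate i)

lemma bsum_add (NN : ℝ) (k : ℕ) (p q : ℕ) (x : X) :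
    bsum T f NN k (q + p) x = bsum T f NN k p x + bsum T f NN k q (T^[p] x) := by
  unfold bsum
  rw [add_comm q p, sum_range_add' (fun i => glog f NN k (T^[i] x)) p q]
  congr 1
  apply Finset.sum_congr rfl
  intro i _
  rw [add_comm p i, Function.iterate_add_apply]

lemma bsum_abs (hnonneg : ∀ n x, 0 ≤ f n x) (hC : ∀ x, f 1 x ≤ C)
    (hsub : ∀ m n : ℕ, 1 ≤ m → 1 ≤ n → ∀ x, f (n + m) x ≤ f m x * f n (T^[m] x))
    {NN : ℝ} (hNN : 0 ≤ NN) {k : ℕ} (hk : 1 ≤ k) (j : ℕ) (x : X) :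
    |bsum T f NN k j x| ≤ ((NN + Real.log (max C 1)) * k) * j := by
  unfold bsum
  calc |∑ i ∈ Finset.range j, glog f NN k (T^[i] x)|
      ≤ ∑ i ∈ Finset.range j, |glog f NN k (T^[i] x)| :=
        Finset.abs_sum_le_sum_abs _ _
    _ ≤ ∑ _i ∈ Finset.range j, ((NN + Real.log (max C 1)) * k) :=
        Finset.sum_le_sum fun i _ => glog_abs hnonneg hC hsub hNN k hk _
    _ = ((NN + Real.log (max C 1)) * k) * j := by
        rw [Finset.sum_const, Finset.card_range, nsmul_eq_mul, mul_comm]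

lemma bsum_integral (μ : Measure X) [IsProbabilityMeasure μ]
    (hT : MeasurePreserving T μ μ) (hmeas : ∀ n, Measurable (f n))
    (hnonneg : ∀ n x, 0 ≤ f n x) (hC : ∀ x, f 1 x ≤ C)
    (hsub : ∀ m n : ℕ, 1 ≤ m → 1 ≤ n → ∀ x, f (n + m) x ≤ f m x * f n (T^[m] x))
    {NN : ℝ} (hNN : 0 ≤ NN) {k : ℕ} (hk : 1 ≤ k) (j : ℕ) :
    ∫ x, bsum T f NN k j x ∂μ = (j : ℝ) * ∫ x, glog f NN k x ∂μ := by
  unfold bsum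
  have hint : ∀ i : ℕ, Integrable (fun x => glog f NN k (T^[i] x)) μ := by
    intro i
    apply integrable_of_bound μ (g := fun x => glog f NN k (T^[i] x))
      (by exact (glog_measurable hmeas NN k).comp (hT.iterate i).measurable)
      ((NN + Real.log (max C 1)) * k)
    exact fun x => glog_abs hnonneg hC hsub hNN k hk _
  rw [integral_finset_sum _ (fun i _ => hint i)]
  have hone : ∀ i : ℕ, ∫ x, glog f NN k (T^[i] x) ∂μ = ∫ x, glog f NN k x ∂μ :=
    fun i => integral_comp_iterate hT i (glog_measurable hmeas NN k)
  rw [Finset.sum_congr rfl fun i _ => hone i, Finset.sum_const, Finset.card_range,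
    nsmul_eq_mul]

lemma bsum_integrable (μ : Measure X) [IsProbabilityMeasure μ]
    (hT : Measurable T) (hmeas : ∀ n, Measurable (f n))
    (hnonneg : ∀ n x, 0 ≤ f n x) (hC : ∀ x, f 1 x ≤ C)
    (hsub : ∀ m n : ℕ, 1 ≤ m → 1 ≤ n → ∀ x, f (n + m) x ≤ f m x * f n (T^[m] x))
    {NN : ℝ} (hNN : 0 ≤ NN) {k : ℕ} (hk : 1 ≤ k) (j : ℕ) :
    Integrable (bsum T f NN k j) μ :=
  integrable_of_bound μ (bsum_measurable hT hmeas NN k j) _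
    (fun x => bsum_abs hnonneg hC hsub hNN hk j x)

lemma neg_N_le_toReal_max (α : EReal) {N : ℝ} (hN : 0 < N) :
    -N ≤ (max α ((-N : ℝ) : EReal)).toReal := by
  have h1 : ((-N : ℝ) : EReal) ≤ max α ((-N:ℝ):EReal) := le_max_right _ _
  rcases eq_or_ne (max α ((-N:ℝ):EReal)) ⊤ with htop | hne
  · rw [htop, EReal.toReal_top]
    linarith
  · have h2 := EReal.toReal_le_toReal h1 (EReal.coe_ne_bot _) hne
    rwa [EReal.toReal_coe] at h2

end BSUM


set_option maxHeartbeats 1600000 in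
/-- Corollary 2.4: under the assumptions of Proposition 2.3, for any `ε, N > 0` and
a.e. `x` there is `C(x) > 0` such that
`f_n(T^m x) ≤ C(x) exp(n max{α, -N}) exp((n+m) ε)` for all `n, m`. -/
theorem subadditive_ergodic_uniform_bound {X : Type*} [MeasurableSpace X]
    (μ : Measure X) [IsProbabilityMeasure μ]
    (T : X → X) (hT : Ergodic T μ) (f : ℕ → X → ℝ)
    (hmeas : ∀ n, Measurable (f n)) (hnonneg : ∀ n x, 0 ≤ f n x)
    (C : ℝ) (hC : ∀ x, f 1 x ≤ C)
    (hsub : ∀ m n : ℕ, 1 ≤ m → 1 ≤ n → ∀ x, f (n + m) x ≤ f m x * f n (T^[m] x))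
    (α : EReal)
    (hα : Tendsto (fun n : ℕ => (((n : ℝ)⁻¹ : ℝ) : EReal) *
        eintegral μ (fun x => elog (f n x))) atTop (nhds α))
    (ε : ℝ) (hε : 0 < ε) (N : ℝ) (hN : 0 < N) :
    ∀ᵐ x ∂μ, ∃ Cx : ℝ, 0 < Cx ∧ ∀ n m : ℕ, 1 ≤ n → 1 ≤ m →
      f n (T^[m] x) ≤ Cx * Real.exp ((n : ℝ) * (max α ((-N : ℝ) : EReal)).toReal) *
        Real.exp (((n + m : ℕ) : ℝ) * ε) := by
  have hL0 : (0:ℝ) ≤ Real.log (max C 1) := Real.log_nonneg (le_max_right C 1)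
  have hc0 : (0:ℝ) ≤ N + Real.log (max C 1) := by linarith
  have hu : Subadditive (useq μ f N) :=
    useq_subadditive μ hT.toMeasurePreserving hmeas hnonneg hC hsub hN.le
  have hbdd := useq_div_bdd μ hmeas hnonneg hC hsub hN.le
  have hβN : -N ≤ (max α ((-N:ℝ):EReal)).toReal := neg_N_le_toReal_max α hN
  have hβ : hu.lim ≤ (max α ((-N:ℝ):EReal)).toReal :=
    useq_lim_le_toReal μ T hT f hmeas hnonneg C hC hsub α hα N hN hu
  -- choose the scale k
  obtain ⟨k, hk1, hak⟩ : ∃ k : ℕ, 1 ≤ k ∧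
      useq μ f N k ≤ (k:ℝ) * ((max α ((-N:ℝ):EReal)).toReal + ε/8) := by
    have h1 : hu.lim < (max α ((-N:ℝ):EReal)).toReal + ε/8 := by linarith
    have h2 : sInf ((fun n : ℕ => useq μ f N n / n) '' Set.Ici 1)
        < (max α ((-N:ℝ):EReal)).toReal + ε/8 := by rw [Subadditive.lim] at h1; exact h1
    have hne : ((fun n : ℕ => useq μ f N n / n) '' Set.Ici 1).Nonempty :=
      ⟨useq μ f N 1 / ((1:ℕ):ℝ), 1, Set.mem_Ici.mpr le_rfl, rfl⟩
    obtain ⟨v, ⟨kk, hkk, rfl⟩, hvlt⟩ := exists_lt_of_csInf_lt hne h2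
    have hkk1 : 1 ≤ kk := hkk
    refine ⟨kk, hkk1, ?_⟩
    have hkk0 : (0:ℝ) < (kk:ℝ) := by exact_mod_cast hkk1
    rw [div_lt_iff₀ hkk0] at hvlt
    nlinarith [hvlt]
  have hk0 : (0:ℝ) < (k:ℝ) := by exact_mod_cast hk1
  have hk1R : (1:ℝ) ≤ (k:ℝ) := by exact_mod_cast hk1
  have hKint : ∫ x, glog f N k x ∂μ ≤ (k:ℝ) * ((max α ((-N:ℝ):EReal)).toReal + ε/8) := by
    rw [← useq_eq μ N k hk1]
    exact hak
  have haabs : |∫ x, glog f N k x ∂μ| ≤ (N + Real.log (max C 1)) * k := by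
    have h3 := useq_abs μ hmeas hnonneg hC hsub hN.le k hk1
    rwa [useq_eq μ N k hk1] at h3
  have hTm : Measurable T := hT.toMeasurePreserving.measurable
  have hc'0 : (0:ℝ) ≤ (N + Real.log (max C 1)) * k := by positivity
  have kw1 := kw_liminf μ T hT (bsum T f N k) (fun j => bsum_measurable hTm hmeas N k j)
      ((N + Real.log (max C 1)) * k) hc'0
      (fun j _ x => bsum_abs hnonneg hC hsub hN.le hk1 j x)
      (fun p q _ _ x => le_of_eq (bsum_add N k p q x))
      (∫ x, glog f N k x ∂μ)
      (fun j _ => by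
        rw [bsum_integral μ hT.toMeasurePreserving hmeas hnonneg hC hsub hN.le hk1 j]
        exact le_of_eq (mul_comm _ _))
  have kw2 := kw_liminf μ T hT (fun j x => -(bsum T f N k j x))
      (fun j => (bsum_measurable hTm hmeas N k j).neg)
      ((N + Real.log (max C 1)) * k) hc'0
      (fun j hj x => by
        show |(-(bsum T f N k j x))| ≤ _
        rw [abs_neg]
        exact bsum_abs hnonneg hC hsub hN.le hk1 j x)
      (fun p q _ _ x => by
        show -(bsum T f N k (q + p) x) ≤ -(bsum T f N k p x) + -(bsum T f N k q (T^[p] x))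
        rw [bsum_add (T := T) (f := f) N k p q x]
        ring_nf
        exact le_refl _)
      (-(∫ x, glog f N k x ∂μ))
      (fun j _ => by
        show _ ≤ ∫ x, -(bsum T f N k j x) ∂μ
        rw [integral_neg, bsum_integral μ hT.toMeasurePreserving hmeas hnonneg hC hsub
          hN.le hk1 j]
        exact le_of_eq (by ring))
  filter_upwards [kw1, kw2] with x h1 h2
  have hε4 : (0:ℝ) < (k:ℝ) * ε / 4 := by positivity
  obtain ⟨J1, hJ1⟩ := eventually_atTop.mp (h1 ((k:ℝ) * ε / 4) hε4)
  obtain ⟨J2, hJ2⟩ := eventually_atTop.mp (h2 ((k:ℝ) * ε / 4) hε4)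
  obtain ⟨Dv, hDdef⟩ : ∃ v : ℝ, v = ∑ j ∈ Finset.range (max J1 J2),
      |bsum T f N k j x - (j:ℝ) * ∫ x, glog f N k x ∂μ| := ⟨_, rfl⟩
  have hD0 : 0 ≤ Dv := by
    rw [hDdef]
    exact Finset.sum_nonneg fun j _ => abs_nonneg _
  have hDbd : ∀ j : ℕ, |bsum T f N k j x - (j:ℝ) * ∫ x, glog f N k x ∂μ|
      ≤ Dv + (j:ℝ) * ((k:ℝ) * ε / 4) := by
    intro j
    have hj4 : (0:ℝ) ≤ (j:ℝ) * ((k:ℝ) * ε / 4) := by positivity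
    rcases lt_or_ge j (max J1 J2) with hj | hj
    · have h3 : |bsum T f N k j x - (j:ℝ) * ∫ x, glog f N k x ∂μ| ≤ Dv := by
        rw [hDdef]
        exact Finset.single_le_sum (f := fun i =>
          |bsum T f N k i x - (i:ℝ) * ∫ x, glog f N k x ∂μ|)
          (fun i _ => abs_nonneg _) (Finset.mem_range.mpr hj)
      linarith
    · have h3 := hJ1 j (le_trans (le_max_left _ _) hj)
      have h4 := hJ2 j (le_trans (le_max_right _ _) hj)
      rw [abs_le]
      constructor
      · nlinarith [h3]
      · nlinarith [h4]
  refine ⟨Real.exp (4*(k:ℝ)*(N + Real.log (max C 1)) + (k:ℝ)*N + 2*Dv),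
    Real.exp_pos _, ?_⟩
  intro n m hn hm
  have hn0 : (0:ℝ) < (n:ℝ) := by exact_mod_cast hn
  have hm0 : (0:ℝ) < (m:ℝ) := by exact_mod_cast hm
  have key : glog f N n (T^[m] x)
      ≤ (4*(k:ℝ)*(N + Real.log (max C 1)) + (k:ℝ)*N + 2*Dv)
        + (n:ℝ) * (max α ((-N:ℝ):EReal)).toReal + ((n:ℝ) + (m:ℝ)) * ε := by
    rcases lt_or_ge n k with hnk | hkn
    · have h5 : glog f N n (T^[m] x) ≤ (n:ℝ) * Real.log (max C 1) :=
        glog_le hnonneg hC hsub hN.le n hn _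
      have h6 : (n:ℝ) ≤ (k:ℝ) := by exact_mod_cast hnk.le
      have h7 : -((n:ℝ)*N) ≤ (n:ℝ) * (max α ((-N:ℝ):EReal)).toReal := by
        nlinarith [hβN, hn0]
      have h8 : (n:ℝ) * Real.log (max C 1) ≤ (k:ℝ) * Real.log (max C 1) :=
        mul_le_mul_of_nonneg_right h6 hL0
      have h9 : (n:ℝ)*N ≤ (k:ℝ)*N := mul_le_mul_of_nonneg_right h6 hN.le
      have h10 : (0:ℝ) ≤ ((n:ℝ) + (m:ℝ)) * ε := by positivity
      nlinarith [h5, h7, h8, h9, h10, hD0, mul_pos hk0 hN, mul_nonneg hk0.le hL0]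
    · -- main case, n ≥ k
      have havg := glog_avg hnonneg hC hsub hN.le hk1 n hkn (T^[m] x)
      have hchain : ∑ j ∈ Finset.range (n - k + 1), glog f N k (T^[j] (T^[m] x))
          = bsum T f N k ((n - k + 1) + m) x - bsum T f N k m x := by
        have h8 := bsum_add (T := T) (f := f) N k m (n - k + 1) x
        have h9 : bsum T f N k (n - k + 1) (T^[m] x)
            = ∑ j ∈ Finset.range (n - k + 1), glog f N k (T^[j] (T^[m] x)) := rfl
        rw [← h9]
        linarith [h8]
      rw [hchain] at havg
      have hcastJ : (((n - k + 1) + m : ℕ):ℝ) = (n:ℝ) - (k:ℝ) + 1 + (m:ℝ) := by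
        push_cast [hkn]
        ring
      have hB1 := (abs_le.mp (hDbd ((n - k + 1) + m))).2
      have hB2 := (abs_le.mp (hDbd m)).1
      rw [hcastJ] at hB1
      -- abbreviate
      have hav_le := hKint
      have hav1 := (abs_le.mp haabs).1
      have hav2 := (abs_le.mp haabs).2
      have e3 : ((n:ℝ) - (k:ℝ) + 1) * (∫ x, glog f N k x ∂μ)
          ≤ (n:ℝ) * (∫ x, glog f N k x ∂μ)
            + ((k:ℝ) - 1) * ((N + Real.log (max C 1)) * k) := by
        nlinarith [le_abs_self (∫ x, glog f N k x ∂μ),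
          neg_abs_le (∫ x, glog f N k x ∂μ), haabs, hk1R]
      have e4 : (n:ℝ) * (∫ x, glog f N k x ∂μ)
          ≤ (n:ℝ) * ((k:ℝ) * ((max α ((-N:ℝ):EReal)).toReal + ε/8)) :=
        mul_le_mul_of_nonneg_left hav_le hn0.le
      -- the multiplied final bound
      have efinal : (k:ℝ) * glog f N n (T^[m] x)
          ≤ (k:ℝ) * ((4*(k:ℝ)*(N + Real.log (max C 1)) + (k:ℝ)*N + 2*Dv)
            + (n:ℝ) * (max α ((-N:ℝ):EReal)).toReal + ((n:ℝ) + (m:ℝ)) * ε) := by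
        have p1 : (0:ℝ) ≤ (n:ℝ) * ((k:ℝ) * ε) := by positivity
        have p2 : (0:ℝ) ≤ (m:ℝ) * ((k:ℝ) * ε) := by positivity
        have p3 : (0:ℝ) ≤ (k:ℝ) * ((k:ℝ) * (N + Real.log (max C 1))) := by positivity
        have p4 : (0:ℝ) ≤ (k:ℝ) * ((k:ℝ) * N) := by positivity
        have p5 : (0:ℝ) ≤ ((k:ℝ) - 1) * Dv := mul_nonneg (by linarith) hD0
        have p6 : (0:ℝ) ≤ (N + Real.log (max C 1)) * k := hc'0
        nlinarith [havg, hB1, hB2, e3, e4, p1, p2, p3, p4, p5, p6,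
          mul_pos hn0 (mul_pos hk0 hε), mul_pos hm0 (mul_pos hk0 hε)]
      exact le_of_mul_le_mul_left efinal hk0
  -- convert to the exponential form
  have hfG : f n (T^[m] x) ≤ Real.exp (glog f N n (T^[m] x)) := by
    calc f n (T^[m] x) ≤ max (f n (T^[m] x)) (Real.exp (-(N * (n:ℝ)))) := le_max_left _ _
      _ = Real.exp (glog f N n (T^[m] x)) :=
          (Real.exp_log (glog_pos_arg N n _ hnonneg)).symm
  calc f n (T^[m] x) ≤ Real.exp (glog f N n (T^[m] x)) := hfG
    _ ≤ Real.exp ((4*(k:ℝ)*(N + Real.log (max C 1)) + (k:ℝ)*N + 2*Dv)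
        + (n:ℝ) * (max α ((-N:ℝ):EReal)).toReal + ((n:ℝ) + (m:ℝ)) * ε) :=
        Real.exp_le_exp.mpr key
    _ = Real.exp (4*(k:ℝ)*(N + Real.log (max C 1)) + (k:ℝ)*N + 2*Dv)
        * Real.exp ((n:ℝ) * (max α ((-N:ℝ):EReal)).toReal)
        * Real.exp (((n + m : ℕ) : ℝ) * ε) := by
        rw [Real.exp_add, Real.exp_add]
        congr 2
        push_cast
        ring
end

section
/- If {f_n(x)} is a submultiplicative sequence of functions on the full shift Σ (i.e., f_{n+m}(x) ≤ f_m(x) f_n(σ^m x)) with C = max{1, sup_x f_1(x)} < ∞, then for any n ≥ 2k, (f_n(x))^k ≤ C^{2k²} ∏_{j=0}^{n−k} f_k(σ^j x) for all x. -/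
/-- The shift map on the one-sided full shift `Σ = {1,…,ℓ}^ℕ`. -/
def shift (ℓ : ℕ) : (ℕ → Fin ℓ) → (ℕ → Fin ℓ) := fun x i => x (i + 1)

/-- Lemma 2.2 of Cao–Feng–Huang: for a submultiplicative sequence of nonnegative
functions on the full shift with `C = max{1, sup f₁} < ∞`, one has
`(f_n(x))^k ≤ C^(2k²) ∏_{j=0}^{n-k} f_k(σ^j x)` for all `n ≥ 2k` and all `x`. -/
theorem submultiplicative_power_bound (ℓ : ℕ) (f : ℕ → (ℕ → Fin ℓ) → ℝ)
    (hnonneg : ∀ n x, 0 ≤ f n x)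
    (hsub : ∀ m n : ℕ, 1 ≤ m → 1 ≤ n → ∀ x, f (n + m) x ≤ f m x * f n ((shift ℓ)^[m] x))
    (C : ℝ) (hC1 : 1 ≤ C) (hC : ∀ x, f 1 x ≤ C)
    (k : ℕ) (hk : 1 ≤ k) (n : ℕ) (hn : 2 * k ≤ n) (x : ℕ → Fin ℓ) :
    (f n x) ^ k ≤ C ^ (2 * k ^ 2) *
      ∏ j ∈ Finset.range (n - k + 1), f k ((shift ℓ)^[j] x) := by
  have hC0 : (0:ℝ) ≤ C := le_trans zero_le_one hC1
  have hk0 : 0 < k := hk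
  -- f m y ≤ C ^ m for m ≥ 1
  have hB : ∀ m, 1 ≤ m → ∀ y, f m y ≤ C ^ m := by
    intro m hm
    induction m with
    | zero => omega
    | succ m ih =>
      intro y
      rcases Nat.eq_zero_or_pos m with hm0 | hm1
      · subst hm0; simpa using hC y
      · calc f (m + 1) y ≤ f 1 y * f m ((shift ℓ)^[1] y) := hsub 1 m le_rfl hm1 y
          _ ≤ C * C ^ m := by
            apply mul_le_mul (hC y) (ih hm1 _) (hnonneg _ _) hC0
          _ = C ^ (m + 1) := by ring
  -- chain bound
  have hA : ∀ q, 1 ≤ q → ∀ y, f (q * k) y ≤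
      ∏ t ∈ Finset.range q, f k ((shift ℓ)^[t * k] y) := by
    intro q hq
    induction q with
    | zero => omega
    | succ q ih =>
      intro y
      rcases Nat.eq_zero_or_pos q with hq0 | hq1
      · subst hq0; simp
      · have h1 : f (k + q * k) y ≤ f (q * k) y * f k ((shift ℓ)^[q * k] y) :=
          hsub (q * k) k (Nat.le_mul_of_pos_left k hq1 |>.trans' hk) hk y
        calc f ((q + 1) * k) y = f (k + q * k) y := by ring_nf
          _ ≤ f (q * k) y * f k ((shift ℓ)^[q * k] y) := h1
          _ ≤ (∏ t ∈ Finset.range q, f k ((shift ℓ)^[t * k] y)) *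
                f k ((shift ℓ)^[q * k] y) := by
              apply mul_le_mul_of_nonneg_right (ih hq1 y) (hnonneg _ _)
          _ = ∏ t ∈ Finset.range (q + 1), f k ((shift ℓ)^[t * k] y) := by
              rw [Finset.prod_range_succ]
  -- per-residue bound
  have key : ∀ i ∈ Finset.range k, f n x ≤ C ^ (2 * k) *
      ∏ j ∈ (Finset.range (n - k + 1)).filter (fun j => j % k = i),
        f k ((shift ℓ)^[j] x) := by
    intro i hi
    rw [Finset.mem_range] at hi
    set a := n - k - i with ha
    set q := a / k + 1 with hq
    set r := n - i - q * k with hr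
    have hdm := Nat.div_add_mod a k
    have hml := Nat.mod_lt a hk0
    have hc1 : a / k * k = k * (a / k) := Nat.mul_comm _ _
    have hain : a + i + k = n := by omega
    have hqk : q * k = a / k * k + k := by rw [hq]; ring
    have hdle : a / k * k ≤ a := Nat.div_mul_le_self a k
    have hn_eq : n = i + q * k + r := by omega
    have hrk : r < k := by omega
    have hq1 : 1 ≤ q := by rw [hq]; exact Nat.le_add_left 1 _
    have hqk1 : 1 ≤ q * k := Nat.mul_pos hq1 hk0
    set P : ℝ := ∏ t ∈ Finset.range q, f k ((shift ℓ)^[t * k + i] x) with hP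
    have hPnonneg : 0 ≤ P := Finset.prod_nonneg fun t _ => hnonneg _ _
    -- f (q*k) (σ^i x) ≤ P
    have hchain : f (q * k) ((shift ℓ)^[i] x) ≤ P := by
      calc f (q * k) ((shift ℓ)^[i] x) ≤
          ∏ t ∈ Finset.range q, f k ((shift ℓ)^[t * k] ((shift ℓ)^[i] x)) :=
            hA q hq1 _
        _ = P := by
            apply Finset.prod_congr rfl
            intro t _
            rw [← Function.iterate_add_apply]
    -- f (q*k + r) (σ^i x) ≤ P * C^r
    have h2 : f (q * k + r) ((shift ℓ)^[i] x) ≤ P * C ^ r := by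
      rcases Nat.eq_zero_or_pos r with hr0 | hr1
      · rw [hr0]; simpa using hchain
      · calc f (q * k + r) ((shift ℓ)^[i] x)
            = f (r + q * k) ((shift ℓ)^[i] x) := by rw [Nat.add_comm]
          _ ≤ f (q * k) ((shift ℓ)^[i] x) *
                f r ((shift ℓ)^[q * k] ((shift ℓ)^[i] x)) := hsub (q * k) r hqk1 hr1 _
          _ ≤ P * C ^ r := mul_le_mul hchain (hB r hr1 _) (hnonneg _ _) hPnonneg
    -- f n x ≤ C^i * (P * C^r)
    have h1 : f n x ≤ C ^ i * (P * C ^ r) := by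
      rcases Nat.eq_zero_or_pos i with hi0 | hi1
      · subst hi0
        have hn2 : n = q * k + r := by omega
        rw [pow_zero, one_mul, hn2]
        simpa using h2
      · have hstep : f n x ≤ f i x * f (q * k + r) ((shift ℓ)^[i] x) := by
          have := hsub i (q * k + r) hi1 (by omega) x
          have heq : q * k + r + i = n := by omega
          rwa [heq] at this
        calc f n x ≤ f i x * f (q * k + r) ((shift ℓ)^[i] x) := hstep
          _ ≤ C ^ i * (P * C ^ r) :=
            mul_le_mul (hB i hi1 x) h2 (hnonneg _ _) (pow_nonneg hC0 i)
    -- reindex P as a fiber product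
    have hPeq : P = ∏ j ∈ (Finset.range (n - k + 1)).filter (fun j => j % k = i),
        f k ((shift ℓ)^[j] x) := by
      rw [hP]
      apply Finset.prod_nbij' (i := fun t => t * k + i) (j := fun j => j / k)
      · intro t ht
        rw [Finset.mem_range] at ht
        rw [Finset.mem_filter, Finset.mem_range]
        constructor
        · have : t * k ≤ a / k * k := Nat.mul_le_mul_right k (by omega)
          omega
        · exact Nat.mul_add_mod_of_lt hi
      · intro j hj
        rw [Finset.mem_filter, Finset.mem_range] at hj
        rw [Finset.mem_range]
        obtain ⟨hj1, hj2⟩ := hj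
        have hdm2 := Nat.div_add_mod j k
        have hc2 : j / k * k = k * (j / k) := Nat.mul_comm _ _
        have : j / k * k ≤ a := by omega
        have : j / k ≤ a / k := Nat.le_div_iff_mul_le hk0 |>.2 this
        omega
      · intro t ht
        simp [Nat.add_comm (t * k) i, Nat.add_mul_div_right _ _ hk0, Nat.div_eq_of_lt hi]
      · intro j hj
        rw [Finset.mem_filter] at hj
        have hdm2 := Nat.div_add_mod j k
        have hc2 : j / k * k = k * (j / k) := Nat.mul_comm _ _
        omega
      · intro t _; rfl
    calc f n x ≤ C ^ i * (P * C ^ r) := h1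
      _ = C ^ (i + r) * P := by rw [pow_add]; ring
      _ ≤ C ^ (2 * k) * P := by
          apply mul_le_mul_of_nonneg_right _ hPnonneg
          exact pow_le_pow_right₀ hC1 (by omega)
      _ = C ^ (2 * k) * ∏ j ∈ (Finset.range (n - k + 1)).filter (fun j => j % k = i),
            f k ((shift ℓ)^[j] x) := by rw [hPeq]
  -- assemble
  calc (f n x) ^ k = ∏ _i ∈ Finset.range k, f n x := by
        rw [Finset.prod_const, Finset.card_range]
    _ ≤ ∏ i ∈ Finset.range k, (C ^ (2 * k) *
          ∏ j ∈ (Finset.range (n - k + 1)).filter (fun j => j % k = i),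
            f k ((shift ℓ)^[j] x)) :=
        Finset.prod_le_prod (fun i _ => hnonneg n x) key
    _ = (C ^ (2 * k)) ^ k * ∏ i ∈ Finset.range k,
          ∏ j ∈ (Finset.range (n - k + 1)).filter (fun j => j % k = i),
            f k ((shift ℓ)^[j] x) := by
        rw [Finset.prod_mul_distrib, Finset.prod_const, Finset.card_range]
    _ = C ^ (2 * k ^ 2) * ∏ j ∈ Finset.range (n - k + 1), f k ((shift ℓ)^[j] x) := by
        rw [Finset.prod_fiberwise_of_maps_to (fun j _ => Finset.mem_range.2 (Nat.mod_lt j hk0)),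
          ← pow_mul]
        ring_nf
end
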